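/- arXiv:math/0505417 — 2 statements merged into one kernel-verified Lean document; each statement's English description precedes it below -/
import Mathlib

section
/- Let T² = ℝ²/ℤ² with the flat metrics g_ε obtained from the standard metric by scaling by ε² in the direction of the line D spanned by (1, α) (α irrational) and leaving the orthogonal direction unchanged. Then liminf_{ε→0} ln(diam(T², g_ε))/ln(ε) = 1/μ(α), where μ(α) is the irrationality exponent of α. -/
open scoped ENNReal

/-- The irrationality exponent of a real number `α`:
the supremum of exponents `ν` such that `|α - p/q| < 1/q^ν` has infinitely many
integer solutions `(p, q)` with `q ≥ 1`. -/
noncomputable def irrExp (α : ℝ) : ℝ≥0∞ :=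
  sSup {m : ℝ≥0∞ | ∃ ν : ℝ, m = ENNReal.ofReal ν ∧
    {pq : ℤ × ℤ | 1 ≤ pq.2 ∧ |α - (pq.1 : ℝ) / (pq.2 : ℝ)| < 1 / (pq.2 : ℝ) ^ ν}.Infinite}


/-- The norm on `ℝ²` obtained from the standard Euclidean metric by scaling by `ε²`
the component along the line `D = ℝ·(1, α)` and keeping the orthogonal component. -/
noncomputable def normEps (α ε : ℝ) (x : ℝ × ℝ) : ℝ :=
  Real.sqrt ((ε ^ 2 * (x.1 + α * x.2) ^ 2 + (α * x.1 - x.2) ^ 2) / (1 + α ^ 2))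

/-- The diameter of the flat torus `(T² = ℝ²/ℤ², g_ε)`: the supremum over points of the
distance to the lattice `ℤ²` (covering radius). -/
noncomputable def diamEps (α ε : ℝ) : ℝ :=
  sSup {r : ℝ | ∃ x : ℝ × ℝ,
    r = sInf {s : ℝ | ∃ p q : ℤ, s = normEps α ε (x.1 - p, x.2 - q)}}

namespace S14

variable {α ε : ℝ}

lemma Spos (α : ℝ) : (0:ℝ) < 1 + α ^ 2 := by positivity

noncomputable def nsq (α ε : ℝ) (x : ℝ × ℝ) : ℝ :=
  (ε ^ 2 * (x.1 + α * x.2) ^ 2 + (α * x.1 - x.2) ^ 2) / (1 + α ^ 2)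

lemma nsq_nonneg (α ε : ℝ) (x : ℝ × ℝ) : 0 ≤ nsq α ε x := by
  unfold nsq; positivity

lemma normEps_eq (α ε : ℝ) (x : ℝ × ℝ) : normEps α ε x = Real.sqrt (nsq α ε x) := rfl

lemma normEps_nonneg (α ε : ℝ) (x : ℝ × ℝ) : 0 ≤ normEps α ε x := Real.sqrt_nonneg _

lemma normEps_sq (α ε : ℝ) (x : ℝ × ℝ) : normEps α ε x ^ 2 = nsq α ε x :=
  Real.sq_sqrt (nsq_nonneg α ε x)

lemma normEps_pos (hε : 0 < ε) {x : ℝ × ℝ} (hx : x ≠ 0) : 0 < normEps α ε x := by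
  rw [normEps_eq]
  apply Real.sqrt_pos.2
  have hS := Spos α
  apply div_pos _ hS
  rcases eq_or_ne (α * x.1 - x.2) 0 with h | h
  · have h1 : x.1 + α * x.2 ≠ 0 := by
      intro h2
      apply hx
      have e1 : (1 + α ^ 2) * x.1 = (x.1 + α * x.2) + α * (α * x.1 - x.2) := by ring
      have e2 : (1 + α ^ 2) * x.2 = α * (x.1 + α * x.2) - (α * x.1 - x.2) := by ring
      rw [h, h2] at e1 e2
      have hx1 : x.1 = 0 := by
        have := hS.ne'
        rcases mul_eq_zero.1 (by linarith : (1 + α ^ 2) * x.1 = 0) with h'|h'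
        · exact absurd h' hS.ne'
        · exact h'
      have hx2 : x.2 = 0 := by
        have := hS.ne'
        rcases mul_eq_zero.1 (by linarith : (1 + α ^ 2) * x.2 = 0) with h'|h'
        · exact absurd h' hS.ne'
        · exact h'
      exact Prod.ext hx1 hx2
    have : 0 < ε ^ 2 * (x.1 + α * x.2) ^ 2 := by positivity
    nlinarith [sq_nonneg (α * x.1 - x.2)]
  · have : 0 < (α * x.1 - x.2) ^ 2 := by positivity
    nlinarith [sq_nonneg (ε * (x.1 + α * x.2))]

/-- the (u,w) coordinates are an orthogonal change of variables scaled by `√(1+α²)`. -/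
lemma normEps_le_euclid (hε0 : 0 ≤ ε) (hε1 : ε ≤ 1) (x : ℝ × ℝ) :
    normEps α ε x ≤ Real.sqrt (x.1 ^ 2 + x.2 ^ 2) := by
  rw [normEps_eq]
  apply Real.sqrt_le_sqrt
  rw [nsq, div_le_iff₀ (Spos α)]
  have hε2 : ε ^ 2 ≤ 1 := by nlinarith
  nlinarith [mul_nonneg (by linarith : (0:ℝ) ≤ 1 - ε ^ 2) (sq_nonneg (x.1 + α * x.2))]

/-- `|w| ≤ √(1+α²) · ‖x‖`. -/
lemma abs_w_le (hε : 0 < ε) (x : ℝ × ℝ) :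
    |α * x.1 - x.2| ≤ Real.sqrt (1 + α ^ 2) * normEps α ε x := by
  have hS := Spos α
  have h1 : Real.sqrt (1 + α ^ 2) * normEps α ε x =
      Real.sqrt ((1 + α ^ 2) * nsq α ε x) := by
    rw [normEps_eq, Real.sqrt_mul hS.le]
  rw [h1]
  have h2 : (1 + α ^ 2) * nsq α ε x = ε ^ 2 * (x.1 + α * x.2) ^ 2 + (α * x.1 - x.2) ^ 2 := by
    unfold nsq; field_simp
  rw [h2]
  have := Real.sqrt_le_sqrt (show (α * x.1 - x.2) ^ 2 ≤
    ε ^ 2 * (x.1 + α * x.2) ^ 2 + (α * x.1 - x.2) ^ 2 by nlinarith [sq_nonneg (ε * (x.1 + α * x.2))])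
  rwa [Real.sqrt_sq_eq_abs] at this

/-- `ε|x₁| ≤ √2 · ‖x‖` provided `ε|α| ≤ 1`. -/
lemma abs_fst_le (hε : 0 < ε) (hεα : ε * |α| ≤ 1) (x : ℝ × ℝ) :
    ε * |x.1| ≤ Real.sqrt 2 * normEps α ε x := by
  have hS := Spos α
  set u := x.1 + α * x.2 with hu
  set w := α * x.1 - x.2 with hw
  -- √2 * normEps ≥ √2 * sqrt((ε²u²+w²)/S) and (ε|u|+|w|)² ≤ 2(ε²u²+w²)
  have key : (ε * |u| + |w|) / Real.sqrt (1 + α ^ 2) ≤ Real.sqrt 2 * normEps α ε x := by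
    have hs : (0:ℝ) < Real.sqrt (1 + α ^ 2) := Real.sqrt_pos.2 hS
    rw [div_le_iff₀ hs, normEps_eq]
    have h1 : Real.sqrt 2 * Real.sqrt (nsq α ε x) * Real.sqrt (1 + α ^ 2)
        = Real.sqrt (2 * (nsq α ε x * (1 + α ^ 2))) := by
      rw [Real.sqrt_mul (by norm_num), Real.sqrt_mul (nsq_nonneg α ε x)]
      ring
    rw [h1]
    have h2 : nsq α ε x * (1 + α ^ 2) = ε ^ 2 * u ^ 2 + w ^ 2 := by
      unfold nsq; field_simp; rw [hu, hw]; ring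
    rw [h2]
    have h3 : (ε * |u| + |w|) ^ 2 ≤ 2 * (ε ^ 2 * u ^ 2 + w ^ 2) := by
      have hau : |u| ^ 2 = u ^ 2 := sq_abs u
      have haw : |w| ^ 2 = w ^ 2 := sq_abs w
      nlinarith [sq_nonneg (ε * |u| - |w|), abs_nonneg u, abs_nonneg w]
    calc ε * |u| + |w| = Real.sqrt ((ε * |u| + |w|) ^ 2) := by
          rw [Real.sqrt_sq (by positivity)]
      _ ≤ _ := Real.sqrt_le_sqrt h3
  refine le_trans ?_ key
  rw [le_div_iff₀ (Real.sqrt_pos.2 hS)]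
  -- ε|x₁| √(1+α²) ≤ ε|u| + |w| ;  since  √(1+α²) ≤ (1+α²) and (1+α²)x₁ = u + αw
  have h4 : ε * ((1 + α^2) * |x.1|) ≤ ε * |u| + |w| := by
    have h5 : (1 + α^2) * x.1 = u + α * w := by rw [hu, hw]; ring
    have h6 : (1 + α^2) * |x.1| = |u + α * w| := by
      rw [← abs_of_pos hS, ← abs_mul, h5]
    rw [h6]
    have h7 : |u + α * w| ≤ |u| + |α| * |w| := by
      calc |u + α * w| ≤ |u| + |α * w| := abs_add_le _ _
        _ = |u| + |α| * |w| := by rw [abs_mul]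
    have h8 : ε * |α| * |w| ≤ |w| := mul_le_of_le_one_left (abs_nonneg w) hεα
    nlinarith [abs_nonneg w, abs_nonneg u, hε.le]
  have h9 : Real.sqrt (1 + α ^ 2) ≤ 1 + α ^ 2 := by
    nlinarith [Real.sq_sqrt hS.le, Real.sqrt_nonneg (1 + α^2), sq_nonneg (Real.sqrt (1+α^2) - 1)]
  calc ε * |x.1| * Real.sqrt (1 + α ^ 2) ≤ ε * |x.1| * (1 + α ^ 2) := by
        have : (0:ℝ) ≤ ε * |x.1| := by positivity
        exact mul_le_mul_of_nonneg_left h9 this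
    _ = ε * ((1 + α^2) * |x.1|) := by ring
    _ ≤ ε * |u| + |w| := h4

/-- upper bound for near-lattice vectors: `‖(p,q)‖ ≤ (α²+3)(ε|p| + |αp−q|)`. -/
lemma normEps_int_le (hε : 0 < ε) (hεα : ε * |α| ≤ 1) (p q : ℝ) :
    normEps α ε (p, q) ≤ (α ^ 2 + 3) * (ε * |p| + |α * p - q|) := by
  have hS := Spos α
  set u := p + α * q with hu
  set w := α * p - q with hw
  have hns : nsq α ε (p, q) = (ε ^ 2 * u ^ 2 + w ^ 2) / (1 + α ^ 2) := rfl
  -- √(a²+b²) ≤ |a| + |b|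
  have step1 : normEps α ε (p, q) ≤ ε * |u| + |w| := by
    rw [normEps_eq, hns]
    have h1 : (ε ^ 2 * u ^ 2 + w ^ 2) / (1 + α ^ 2) ≤ (ε * |u| + |w|) ^ 2 := by
      rw [div_le_iff₀ hS]
      have hau : |u| ^ 2 = u ^ 2 := sq_abs u
      have haw : |w| ^ 2 = w ^ 2 := sq_abs w
      nlinarith [mul_nonneg (mul_nonneg hε.le (abs_nonneg u)) (abs_nonneg w),
        sq_nonneg (ε * |u| + |w|), sq_nonneg α]
    calc Real.sqrt ((ε ^ 2 * u ^ 2 + w ^ 2) / (1 + α ^ 2)) ≤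
        Real.sqrt ((ε * |u| + |w|) ^ 2) := Real.sqrt_le_sqrt h1
      _ = ε * |u| + |w| := Real.sqrt_sq (by positivity)
  refine step1.trans ?_
  -- |u| ≤ (1+α²)|p| + |α||w| ;  ε|α||w| ≤ |w|
  have h5 : u = (1 + α^2) * p - α * w := by rw [hu, hw]; ring
  have h6 : |u| ≤ (1 + α^2) * |p| + |α| * |w| := by
    rw [h5]
    calc |(1 + α^2) * p - α * w| ≤ |(1 + α^2) * p| + |α * w| := abs_sub _ _
      _ = (1 + α^2) * |p| + |α| * |w| := by rw [abs_mul, abs_mul, abs_of_pos hS]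
  have h8 : ε * |α| * |w| ≤ |w| := mul_le_of_le_one_left (abs_nonneg w) hεα
  nlinarith [abs_nonneg w, abs_nonneg p, hε.le, mul_le_mul_of_nonneg_left h6 hε.le,
    mul_nonneg hε.le (abs_nonneg p), sq_nonneg α]

end S14
namespace S14

variable {α ε : ℝ}

/-- distance from `x` to the lattice. -/
noncomputable def dE (α ε : ℝ) (x : ℝ × ℝ) : ℝ :=
  sInf {s : ℝ | ∃ p q : ℤ, s = normEps α ε (x.1 - p, x.2 - q)}

lemma diamEps_eq (α ε : ℝ) : diamEps α ε = sSup {r : ℝ | ∃ x : ℝ × ℝ, r = dE α ε x} := rfl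

lemma dE_set_nonempty (x : ℝ × ℝ) :
    {s : ℝ | ∃ p q : ℤ, s = normEps α ε (x.1 - p, x.2 - q)}.Nonempty :=
  ⟨normEps α ε (x.1 - (0:ℤ), x.2 - (0:ℤ)), 0, 0, rfl⟩

lemma dE_bddBelow (x : ℝ × ℝ) :
    BddBelow {s : ℝ | ∃ p q : ℤ, s = normEps α ε (x.1 - p, x.2 - q)} := by
  refine ⟨0, fun s hs => ?_⟩
  obtain ⟨p, q, rfl⟩ := hs
  exact normEps_nonneg _ _ _

lemma dE_nonneg (x : ℝ × ℝ) : 0 ≤ dE α ε x :=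
  le_csInf (dE_set_nonempty x) (fun s hs => by obtain ⟨p, q, rfl⟩ := hs; exact normEps_nonneg _ _ _)

lemma dE_le (x : ℝ × ℝ) (p q : ℤ) : dE α ε x ≤ normEps α ε (x.1 - p, x.2 - q) :=
  csInf_le (dE_bddBelow x) ⟨p, q, rfl⟩

lemma le_dE (x : ℝ × ℝ) {r : ℝ} (h : ∀ p q : ℤ, r ≤ normEps α ε (x.1 - p, x.2 - q)) :
    r ≤ dE α ε x :=
  le_csInf (dE_set_nonempty x) (fun s hs => by obtain ⟨p, q, rfl⟩ := hs; exact h p q)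

lemma dE_le_const (hε0 : 0 ≤ ε) (hε1 : ε ≤ 1) (x : ℝ × ℝ) : dE α ε x ≤ 0.8 := by
  refine (dE_le x (round x.1) (round x.2)).trans ?_
  refine (normEps_le_euclid hε0 hε1 _).trans ?_
  have h1 : |x.1 - (round x.1 : ℤ)| ≤ 1/2 := by exact_mod_cast abs_sub_round x.1
  have h2 : |x.2 - (round x.2 : ℤ)| ≤ 1/2 := by exact_mod_cast abs_sub_round x.2
  have b1 : (x.1 - (round x.1 : ℤ)) ^ 2 ≤ (1/2)^2 := by
    rw [← sq_abs]; exact pow_le_pow_left₀ (abs_nonneg _) h1 2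
  have b2 : (x.2 - (round x.2 : ℤ)) ^ 2 ≤ (1/2)^2 := by
    rw [← sq_abs]; exact pow_le_pow_left₀ (abs_nonneg _) h2 2
  have : Real.sqrt ((x.1 - (round x.1 : ℤ))^2 + (x.2 - (round x.2 : ℤ))^2) ≤
      Real.sqrt (1/2) := Real.sqrt_le_sqrt (by norm_num at b1 b2 ⊢; linarith)
  refine this.trans ?_
  rw [show (0.8:ℝ) = Real.sqrt (0.8^2) from (Real.sqrt_sq (by norm_num)).symm]
  exact Real.sqrt_le_sqrt (by norm_num)

lemma diam_bddAbove (hε0 : 0 ≤ ε) (hε1 : ε ≤ 1) :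
    BddAbove {r : ℝ | ∃ x : ℝ × ℝ, r = dE α ε x} := by
  refine ⟨0.8, fun r hr => ?_⟩
  obtain ⟨x, rfl⟩ := hr
  exact dE_le_const hε0 hε1 x

lemma dE_le_diamEps (hε0 : 0 ≤ ε) (hε1 : ε ≤ 1) (x : ℝ × ℝ) :
    dE α ε x ≤ diamEps α ε :=
  le_csSup (diam_bddAbove hε0 hε1) ⟨x, rfl⟩

lemma diamEps_le (h : ∀ x : ℝ × ℝ, dE α ε x ≤ r) : diamEps α ε ≤ r :=
  csSup_le ⟨dE α ε 0, 0, rfl⟩ (fun s hs => by obtain ⟨x, rfl⟩ := hs; exact h x)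

lemma diamEps_le_const (hε0 : 0 ≤ ε) (hε1 : ε ≤ 1) : diamEps α ε ≤ 0.8 :=
  diamEps_le (fun x => dE_le_const hε0 hε1 x)

/-- key scalar inequality for the lower bound -/
lemma key_A {SS ε L uv wv r A B d : ℝ} (hSS : 0 < SS) (hL : 0 < L)
    (hL2 : L ^ 2 * SS = ε ^ 2 * uv ^ 2 + wv ^ 2) (hr : r = ε / (2 * L)) (hε : 0 < ε)
    (hG : -wv * A + ε * uv * B = SS * (r * L - ε * d)) (hd : d = 0 ∨ 1 ≤ |d|) :
    SS * r ^ 2 ≤ A ^ 2 + B ^ 2 := by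
  have hrL : r * L = ε / 2 := by rw [hr]; field_simp
  have hcore : ε / 2 ≤ |r * L - ε * d| := by
    rcases hd with h | h
    · have e : r * L - ε * d = ε / 2 := by rw [h, hrL]; ring
      rw [e, abs_of_nonneg (by positivity)]
    · have h1 : ε ≤ |ε * d| := by
        rw [abs_mul, abs_of_pos hε]; nlinarith
      have h2 : |ε * d| - |r * L| ≤ |r * L - ε * d| := by
        have h3 := abs_sub_abs_le_abs_sub (ε * d) (r * L)
        rw [abs_sub_comm] at h3; exact h3
      have h3 : |r * L| = ε / 2 := by rw [hrL]; exact abs_of_nonneg (by positivity)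
      linarith
  have habs : SS * (ε / 2) ≤ |(-wv * A + ε * uv * B)| := by
    rw [hG, abs_mul, abs_of_pos hSS]
    exact mul_le_mul_of_nonneg_left hcore hSS.le
  have cs : (-wv * A + ε * uv * B) ^ 2 ≤ (A ^ 2 + B ^ 2) * (ε ^ 2 * uv ^ 2 + wv ^ 2) := by
    nlinarith [sq_nonneg (ε * uv * A + wv * B)]
  have h4 : (SS * (ε / 2)) ^ 2 ≤ (A ^ 2 + B ^ 2) * (L ^ 2 * SS) := by
    rw [hL2]
    calc (SS * (ε / 2)) ^ 2 ≤ |(-wv * A + ε * uv * B)| ^ 2 := by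
          have h0 : (0:ℝ) ≤ SS * (ε / 2) := by positivity
          exact pow_le_pow_left₀ h0 habs 2
      _ = (-wv * A + ε * uv * B) ^ 2 := sq_abs _
      _ ≤ _ := cs
  have h5 : (SS * (ε/2)^2) * SS ≤ ((A^2+B^2) * L^2) * SS := by linear_combination h4
  have h6 := le_of_mul_le_mul_right h5 hSS
  have hr2 : r ^ 2 = (ε / 2) ^ 2 / L ^ 2 := by rw [hr]; field_simp
  have hL2pos : (0:ℝ) < L ^ 2 := by positivity
  have e2 : SS * ((ε/2)^2 / L^2) = (SS*(ε/2)^2) / L^2 := by ring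
  rw [hr2, e2, div_le_iff₀ hL2pos]
  exact h6

end S14
namespace S14

variable {α ε : ℝ}

lemma diam_lower (hε : 0 < ε) (hε1 : ε ≤ 1) {a b : ℤ} (hab : ¬(a = 0 ∧ b = 0)) :
    ε / (2 * normEps α ε ((a:ℝ), (b:ℝ))) ≤ diamEps α ε := by
  have hSSpos : (0:ℝ) < 1 + α ^ 2 := Spos α
  set SS := 1 + α ^ 2 with hSS
  set uv := (a:ℝ) + α * b with huv
  set wv := α * a - (b:ℝ) with hwv
  set L := normEps α ε ((a:ℝ), (b:ℝ)) with hLdef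
  have hvne : (((a:ℝ), (b:ℝ)) : ℝ × ℝ) ≠ 0 := by
    intro h
    simp only [Prod.ext_iff, Prod.fst_zero, Prod.snd_zero] at h
    exact hab ⟨by exact_mod_cast h.1, by exact_mod_cast h.2⟩
  have hL : 0 < L := normEps_pos hε hvne
  have hL2 : L ^ 2 * SS = ε ^ 2 * uv ^ 2 + wv ^ 2 := by
    rw [hLdef, normEps_sq]
    show (ε ^ 2 * ((a:ℝ) + α * b) ^ 2 + (α * a - (b:ℝ)) ^ 2) / (1 + α ^ 2) * SS = _
    rw [hSS]; field_simp; rw [huv, hwv]; ring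
  set r := ε / (2 * L) with hr
  have hr0 : 0 ≤ r := by positivity
  set ux := -r * wv / (ε * L) with hux
  set wx := r * ε * uv / L with hwx
  refine le_trans ?_ (dE_le_diamEps hε.le hε1 ((ux + α * wx) / SS, (α * ux - wx) / SS))
  apply le_dE
  intro m n
  set x : ℝ × ℝ := ((ux + α * wx) / SS, (α * ux - wx) / SS) with hx
  have hxu : x.1 + α * x.2 = ux := by
    rw [hx]; rw [hSS]; field_simp; ring
  have hxw : α * x.1 - x.2 = wx := by
    rw [hx]; rw [hSS]; field_simp; ring
  set A := ε * ((x.1 - (m:ℝ)) + α * (x.2 - (n:ℝ))) with hA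
  set B := α * (x.1 - (m:ℝ)) - (x.2 - (n:ℝ)) with hB
  set d : ℝ := ((b * m - a * n : ℤ) : ℝ) with hd
  have hG : -wv * A + ε * uv * B = SS * (r * L - ε * d) := by
    have e1 : A = ε * (ux - ((m:ℝ) + α * n)) := by
      rw [hA]
      have : (x.1 - (m:ℝ)) + α * (x.2 - (n:ℝ)) = (x.1 + α * x.2) - ((m:ℝ) + α * n) := by ring
      rw [this, hxu]
    have e2 : B = wx - (α * m - (n:ℝ)) := by
      rw [hB]
      have : α * (x.1 - (m:ℝ)) - (x.2 - (n:ℝ)) = (α * x.1 - x.2) - (α * m - (n:ℝ)) := by ring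
      rw [this, hxw]
    have hεne : ε ≠ 0 := hε.ne'
    have hLne : L ≠ 0 := hL.ne'
    rw [e1, e2, hux, hwx, hd]
    push_cast
    have h1 : -wv * (ε * (-r * wv / (ε * L) - ((m:ℝ) + α * n)))
        + ε * uv * (r * ε * uv / L - (α * m - (n:ℝ)))
        = r * (ε ^ 2 * uv ^ 2 + wv ^ 2) / L
          + ε * (wv * ((m:ℝ) + α * n) - uv * (α * m - (n:ℝ))) := by
      field_simp
      ring
    have h2 : r * (L ^ 2 * SS) / L = SS * (r * L) := by field_simp
    have h3 : wv * ((m:ℝ) + α * n) - uv * (α * m - (n:ℝ))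
        = -(SS * ((b:ℝ) * m - (a:ℝ) * n)) := by
      rw [huv, hwv, hSS]; ring
    rw [h1, ← hL2, h2, h3]
    ring
  have hdor : d = 0 ∨ 1 ≤ |d| := by
    rcases eq_or_ne (b * m - a * n) 0 with h | h
    · left; rw [hd, h]; norm_num
    · right; rw [hd]
      have := Int.one_le_abs h
      calc (1:ℝ) = ((1:ℤ):ℝ) := by norm_num
        _ ≤ ((|b * m - a * n| : ℤ) : ℝ) := by exact_mod_cast this
        _ = |((b * m - a * n : ℤ) : ℝ)| := by rw [Int.cast_abs]
  have hkey := key_A hSSpos hL hL2 hr hε hG hdor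
  have hnsq : nsq α ε (x.1 - (m:ℝ), x.2 - (n:ℝ)) = (A ^ 2 + B ^ 2) / SS := by
    unfold nsq
    rw [hA, hB, hSS]
    simp only []
    ring
  rw [normEps_eq]
  rw [Real.le_sqrt hr0 (nsq_nonneg _ _ _)]
  rw [hnsq, le_div_iff₀ hSSpos]
  linarith [hkey]

end S14
namespace S14

variable {α ε : ℝ}

lemma normEps_smul (α ε t : ℝ) (x : ℝ × ℝ) :
    normEps α ε (t * x.1, t * x.2) = |t| * normEps α ε x := by
  rw [normEps_eq, normEps_eq]
  have h : nsq α ε (t * x.1, t * x.2) = t ^ 2 * nsq α ε x := by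
    unfold nsq; field_simp
  rw [h, Real.sqrt_mul (sq_nonneg t), Real.sqrt_sq_eq_abs]

lemma normEps_triangle (α ε : ℝ) (x y : ℝ × ℝ) :
    normEps α ε (x.1 + y.1, x.2 + y.2) ≤ normEps α ε x + normEps α ε y := by
  have hSS : (0:ℝ) < 1 + α ^ 2 := Spos α
  have cross : (ε ^ 2 * ((x.1 + α * x.2) * (y.1 + α * y.2))
      + (α * x.1 - x.2) * (α * y.1 - y.2)) / (1 + α ^ 2)
      ≤ Real.sqrt (nsq α ε x) * Real.sqrt (nsq α ε y) := by
    set P : ℝ := (ε ^ 2 * ((x.1 + α * x.2) * (y.1 + α * y.2))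
      + (α * x.1 - x.2) * (α * y.1 - y.2)) / (1 + α ^ 2) with hP
    have h1 : P ^ 2 ≤ nsq α ε x * nsq α ε y := by
      rw [hP]; unfold nsq
      rw [div_pow, div_mul_div_comm, ← sq]
      apply div_le_div_of_nonneg_right ?_ (by positivity)
      nlinarith [sq_nonneg (ε * ((x.1 + α * x.2) * (α * y.1 - y.2)
        - (y.1 + α * y.2) * (α * x.1 - x.2)))]
    calc P ≤ |P| := le_abs_self _
      _ = Real.sqrt (P ^ 2) := (Real.sqrt_sq_eq_abs _).symm
      _ ≤ Real.sqrt (nsq α ε x * nsq α ε y) := Real.sqrt_le_sqrt h1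
      _ = _ := Real.sqrt_mul (nsq_nonneg _ _ _) _
  rw [normEps_eq, normEps_eq, normEps_eq]
  rw [show Real.sqrt (nsq α ε x) + Real.sqrt (nsq α ε y)
      = Real.sqrt ((Real.sqrt (nsq α ε x) + Real.sqrt (nsq α ε y)) ^ 2) from
    (Real.sqrt_sq (by positivity)).symm]
  apply Real.sqrt_le_sqrt
  have expand : (Real.sqrt (nsq α ε x) + Real.sqrt (nsq α ε y)) ^ 2
      = nsq α ε x + nsq α ε y + 2 * (Real.sqrt (nsq α ε x) * Real.sqrt (nsq α ε y)) := by
    rw [add_sq, Real.sq_sqrt (nsq_nonneg _ _ _), Real.sq_sqrt (nsq_nonneg _ _ _)]; ring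
  rw [expand]
  have hsum : nsq α ε (x.1 + y.1, x.2 + y.2) = nsq α ε x + nsq α ε y
      + 2 * ((ε ^ 2 * ((x.1 + α * x.2) * (y.1 + α * y.2))
      + (α * x.1 - x.2) * (α * y.1 - y.2)) / (1 + α ^ 2)) := by
    unfold nsq; field_simp; ring
  rw [hsum]
  linarith [cross]

lemma sq_dom {W C : ℝ} (hW0 : 0 ≤ W) (hC0 : 0 ≤ C) (h : W ^ 2 ≤ C ^ 2) : W ≤ C := by
  calc W = Real.sqrt (W ^ 2) := (Real.sqrt_sq hW0).symm
    _ ≤ Real.sqrt (C ^ 2) := Real.sqrt_le_sqrt h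
    _ = C := Real.sqrt_sq hC0

set_option maxHeartbeats 1000000 in
lemma diam_upper (hε : 0 < ε) (hε1 : ε ≤ 1) {a b c d : ℤ} (hdet : a * d - b * c = 1) :
    diamEps α ε ≤ normEps α ε ((a:ℝ), (b:ℝ)) + ε / normEps α ε ((a:ℝ), (b:ℝ)) := by
  have hSSpos : (0:ℝ) < 1 + α ^ 2 := Spos α
  set SS := 1 + α ^ 2 with hSS
  obtain ⟨L, hLdef⟩ : ∃ y : ℝ, y = normEps α ε ((a:ℝ), (b:ℝ)) := ⟨_, rfl⟩
  rw [← hLdef]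
  have hvne : (((a:ℝ), (b:ℝ)) : ℝ × ℝ) ≠ 0 := by
    intro h
    simp only [Prod.ext_iff, Prod.fst_zero, Prod.snd_zero] at h
    have ha : a = 0 := by exact_mod_cast h.1
    have hb : b = 0 := by exact_mod_cast h.2
    rw [ha, hb] at hdet; simp at hdet
  have hL : 0 < L := hLdef ▸ normEps_pos hε hvne
  obtain ⟨uv, huv⟩ : ∃ y : ℝ, y = (a:ℝ) + α * b := ⟨_, rfl⟩
  obtain ⟨wv, hwv⟩ : ∃ y : ℝ, y = α * a - (b:ℝ) := ⟨_, rfl⟩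
  have hL2 : L ^ 2 * SS = ε ^ 2 * uv ^ 2 + wv ^ 2 := by
    rw [hLdef, normEps_sq]
    show (ε ^ 2 * ((a:ℝ) + α * b) ^ 2 + (α * a - (b:ℝ)) ^ 2) / (1 + α ^ 2) * SS = _
    rw [hSS, huv, hwv]; field_simp
  obtain ⟨u0, hu0⟩ : ∃ y : ℝ, y = (c:ℝ) + α * d := ⟨_, rfl⟩
  obtain ⟨w0, hw0⟩ : ∃ y : ℝ, y = α * c - (d:ℝ) := ⟨_, rfl⟩
  obtain ⟨κ, hκ⟩ : ∃ y : ℝ, y = (ε ^ 2 * uv * u0 + wv * w0) / (SS * L ^ 2) := ⟨_, rfl⟩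
  obtain ⟨k, hk⟩ : ∃ k : ℤ, k = round κ := ⟨_, rfl⟩
  obtain ⟨c', hc'⟩ : ∃ z : ℤ, z = c - k * a := ⟨_, rfl⟩
  obtain ⟨d', hd'⟩ : ∃ z : ℤ, z = d - k * b := ⟨_, rfl⟩
  obtain ⟨uv', huv'⟩ : ∃ y : ℝ, y = (c':ℝ) + α * d' := ⟨_, rfl⟩
  obtain ⟨wv', hwv'⟩ : ∃ y : ℝ, y = α * c' - (d':ℝ) := ⟨_, rfl⟩
  obtain ⟨W, hWdef⟩ : ∃ y : ℝ, y = normEps α ε ((c':ℝ), (d':ℝ)) := ⟨_, rfl⟩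
  have hW0 : 0 ≤ W := hWdef ▸ normEps_nonneg _ _ _
  have hW2 : W ^ 2 * SS = ε ^ 2 * uv' ^ 2 + wv' ^ 2 := by
    rw [hWdef, normEps_sq]
    show (ε ^ 2 * ((c':ℝ) + α * d') ^ 2 + (α * c' - (d':ℝ)) ^ 2) / (1 + α ^ 2) * SS = _
    rw [hSS, huv', hwv']; field_simp
  have hdet' : (a:ℝ) * d' - (b:ℝ) * c' = 1 := by
    have : a * d' - b * c' = 1 := by rw [hc', hd']; linear_combination hdet
    exact_mod_cast this
  -- the reduced inner product
  obtain ⟨inn, hinn⟩ : ∃ y : ℝ, y = (ε ^ 2 * uv * uv' + wv * wv') / SS := ⟨_, rfl⟩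
  have hlin : uv' = u0 - (k:ℝ) * uv := by rw [huv', hu0, huv, hc', hd']; push_cast; ring
  have hlin2 : wv' = w0 - (k:ℝ) * wv := by rw [hwv', hw0, hwv, hc', hd']; push_cast; ring
  have hinn_eq : inn = (κ - (k:ℝ)) * L ^ 2 := by
    have hnum : ε ^ 2 * uv * uv' + wv * wv'
        = (ε ^ 2 * uv * u0 + wv * w0) - (k:ℝ) * (L ^ 2 * SS) := by
      rw [hlin, hlin2, hL2]; ring
    have hκ' : ε ^ 2 * uv * u0 + wv * w0 = κ * (SS * L ^ 2) := by
      rw [hκ]; field_simp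
    rw [hinn, hnum, hκ']
    field_simp
  have hinn_le : |inn| ≤ L ^ 2 / 2 := by
    rw [hinn_eq, abs_mul, abs_of_nonneg (by positivity : (0:ℝ) ≤ L ^ 2)]
    have := abs_sub_round κ
    have h2 : |κ - (k:ℝ)| ≤ 1 / 2 := by rw [hk]; exact_mod_cast this
    nlinarith [sq_nonneg L]
  -- Lagrange identity with unimodularity
  have lagrange : (L ^ 2 * W ^ 2) = inn ^ 2 + ε ^ 2 := by
    have hcross : uv * wv' - wv * uv' = SS * ((b:ℝ) * c' - (a:ℝ) * d') := by
      rw [huv, hwv, huv', hwv', hSS]; push_cast; ring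
    have hbc : (b:ℝ) * c' - (a:ℝ) * d' = -1 := by linarith [hdet']
    have main : (ε ^ 2 * uv ^ 2 + wv ^ 2) * (ε ^ 2 * uv' ^ 2 + wv' ^ 2)
        = (ε ^ 2 * uv * uv' + wv * wv') ^ 2 + ε ^ 2 * (uv * wv' - wv * uv') ^ 2 := by ring
    rw [hcross, hbc] at main
    have e1 : L ^ 2 * W ^ 2 = ((ε ^ 2 * uv ^ 2 + wv ^ 2) * (ε ^ 2 * uv' ^ 2 + wv' ^ 2)) / SS ^ 2 := by
      rw [← hL2, ← hW2]; field_simp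
    rw [e1, main, hinn]
    first
    | (field_simp; ring)
    | field_simp
  have hWle : W ≤ L / 2 + ε / L := by
    apply sq_dom hW0 (by positivity)
    have hW2' : W ^ 2 = (inn ^ 2 + ε ^ 2) / L ^ 2 := by
      rw [← lagrange]; field_simp
    rw [hW2']
    rw [div_le_iff₀ (by positivity : (0:ℝ) < L ^ 2)]
    have habs2 : inn ^ 2 ≤ (L ^ 2 / 2) ^ 2 := by
      rw [← sq_abs]
      exact pow_le_pow_left₀ (abs_nonneg _) hinn_le 2
    have expand2 : (L / 2 + ε / L) ^ 2 * L ^ 2 = (L ^ 2 / 2) ^ 2 + ε ^ 2 + ε * L ^ 2 := by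
      field_simp; ring
    rw [expand2]
    have : (0:ℝ) < ε * L ^ 2 := by positivity
    linarith
  -- covering construction
  apply diamEps_le
  intro x
  obtain ⟨t, ht⟩ : ∃ y : ℝ, y = x.1 * d' - x.2 * c' := ⟨_, rfl⟩
  obtain ⟨u, hu⟩ : ∃ y : ℝ, y = x.2 * a - x.1 * b := ⟨_, rfl⟩
  have hrep1 : x.1 = t * a + u * c' := by rw [ht, hu]; linear_combination (-x.1) * hdet'
  have hrep2 : x.2 = t * b + u * d' := by
    rw [ht, hu]; linear_combination (-x.2) * hdet'
  obtain ⟨m, hm⟩ : ∃ z : ℤ, z = round t := ⟨_, rfl⟩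
  obtain ⟨n, hn⟩ : ∃ z : ℤ, z = round u := ⟨_, rfl⟩
  obtain ⟨P1, hP1⟩ : ∃ z : ℤ, z = m * a + n * c' := ⟨_, rfl⟩
  obtain ⟨P2, hP2⟩ : ∃ z : ℤ, z = m * b + n * d' := ⟨_, rfl⟩
  have hdiff1 : x.1 - (P1:ℝ) = (t - m) * a + (u - n) * c' := by
    rw [hP1]; push_cast; linear_combination hrep1
  have hdiff2 : x.2 - (P2:ℝ) = (t - m) * b + (u - n) * d' := by
    rw [hP2]; push_cast; linear_combination hrep2
  have step : normEps α ε (x.1 - (P1:ℝ), x.2 - (P2:ℝ)) ≤ |t - m| * L + |u - n| * W := by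
    rw [hdiff1, hdiff2]
    calc normEps α ε ((t - m) * a + (u - n) * c', (t - m) * b + (u - n) * d')
        ≤ normEps α ε ((t - m) * a, (t - m) * b)
          + normEps α ε ((u - n) * c', (u - n) * d') :=
          normEps_triangle α ε ((t - m) * a, (t - m) * b) ((u - n) * c', (u - n) * d')
      _ = |t - m| * L + |u - n| * W := by
          rw [normEps_smul α ε (t - m) ((a:ℝ), (b:ℝ)), normEps_smul α ε (u - n) ((c':ℝ), (d':ℝ)),
            ← hLdef, ← hWdef]
  have hbm : |t - (m:ℝ)| ≤ 1 / 2 := by rw [hm]; exact_mod_cast abs_sub_round t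
  have hbn : |u - (n:ℝ)| ≤ 1 / 2 := by rw [hn]; exact_mod_cast abs_sub_round u
  have final : normEps α ε (x.1 - (P1:ℝ), x.2 - (P2:ℝ)) ≤ L + ε / L := by
    refine step.trans ?_
    have h1 : |t - (m:ℝ)| * L ≤ L / 2 := by
      have := mul_le_mul_of_nonneg_right hbm hL.le
      linarith
    have h2 : |u - (n:ℝ)| * W ≤ W / 2 := by
      have := mul_le_mul_of_nonneg_right hbn hW0
      linarith
    have hεL : 0 ≤ ε / L := by positivity
    linarith [hWle]
  exact (dE_le x P1 P2).trans final

end S14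
namespace S14

variable {α : ℝ}

def solSet (α ν : ℝ) : Set (ℤ × ℤ) :=
  {pq : ℤ × ℤ | 1 ≤ pq.2 ∧ |α - (pq.1 : ℝ) / (pq.2 : ℝ)| < 1 / (pq.2 : ℝ) ^ ν}

lemma irrExp_eq (α : ℝ) :
    irrExp α = sSup {m : ℝ≥0∞ | ∃ ν : ℝ, m = ENNReal.ofReal ν ∧ (solSet α ν).Infinite} := rfl

lemma solSet_anti {ν ν' : ℝ} (h : ν ≤ ν') : solSet α ν' ⊆ solSet α ν := by
  rintro ⟨p, q⟩ ⟨hq, habs⟩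
  refine ⟨hq, lt_of_lt_of_le habs ?_⟩
  have hq1 : (1:ℝ) ≤ (q:ℝ) := by exact_mod_cast hq
  have := Real.rpow_le_rpow_of_exponent_le hq1 h
  have h2 : (0:ℝ) < (q:ℝ) ^ ν := Real.rpow_pos_of_pos (by linarith) ν
  exact one_div_le_one_div_of_le h2 this

lemma le_irrExp_of_infinite {ν : ℝ} (h : (solSet α ν).Infinite) :
    ENNReal.ofReal ν ≤ irrExp α :=
  le_sSup ⟨ν, rfl, h⟩

lemma finite_of_gt {ν : ℝ} (h : irrExp α < ENNReal.ofReal ν) : (solSet α ν).Finite := by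
  by_contra hinf
  exact absurd (le_irrExp_of_infinite hinf) (not_le.mpr h)

lemma infinite_of_lt {ν : ℝ} (hν : 0 ≤ ν) (h : ENNReal.ofReal ν < irrExp α) :
    (solSet α ν).Infinite := by
  rw [irrExp_eq, lt_sSup_iff] at h
  obtain ⟨m, ⟨ν'', rfl, hinf⟩, hlt⟩ := h
  have hle : ν ≤ ν'' := by
    by_contra hcon
    push_neg at hcon
    exact absurd (ENNReal.ofReal_le_ofReal hcon.le) (not_le.mpr hlt)
  exact hinf.mono (solSet_anti hle)

lemma infinite_solSet_two (hα : Irrational α) : (solSet α 2).Infinite := by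
  have h := Real.infinite_rat_abs_sub_lt_one_div_den_sq_of_irrational hα
  have hinj : Set.InjOn (fun q : ℚ => ((q.num, (q.den : ℤ)) : ℤ × ℤ))
      {q : ℚ | |α - (q:ℝ)| < 1 / (q.den : ℝ) ^ 2} := by
    intro q1 _ q2 _ heq
    simp only [Prod.mk.injEq] at heq
    exact Rat.ext heq.1 (by exact_mod_cast heq.2)
  refine (h.image hinj).mono ?_
  rintro pq ⟨r, hr, heq⟩
  rw [← heq]
  constructor
  · show (1:ℤ) ≤ (r.den:ℤ)
    exact_mod_cast r.pos
  · show |α - (r.num:ℝ)/((r.den:ℤ):ℝ)| < 1 / ((r.den:ℤ):ℝ) ^ (2:ℝ)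
    have e1 : ((r.den:ℤ):ℝ) = (r.den:ℝ) := by push_cast; rfl
    have e2 : ((r.den:ℝ)) ^ (2:ℝ) = ((r.den:ℝ)) ^ (2:ℕ) := by
      rw [← Real.rpow_natCast ((r.den:ℝ)) 2]; norm_num
    have e3 : (r.num:ℝ)/(r.den:ℝ) = (r:ℝ) := by rw [Rat.cast_def]
    rw [e1, e2, e3]
    exact_mod_cast hr

lemma irrExp_ge_two (hα : Irrational α) : 2 ≤ irrExp α := by
  have := le_irrExp_of_infinite (infinite_solSet_two hα)
  have h2 : ENNReal.ofReal (2:ℝ) = (2 : ℝ≥0∞) := by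
    rw [ENNReal.ofReal_ofNat]
  rwa [h2] at this

lemma exists_large_denom {ν : ℝ} (hν : 0 ≤ ν) (hinf : (solSet α ν).Infinite) (N : ℤ) :
    ∃ pq : ℤ × ℤ, pq ∈ solSet α ν ∧ N ≤ pq.2 := by
  by_contra hcon
  push_neg at hcon
  apply hinf
  obtain ⟨M, hM⟩ : ∃ M : ℤ, M = ⌈|α|⌉ + 1 := ⟨_, rfl⟩
  have hMr : |α| + 1 ≤ (M:ℝ) := by
    rw [hM]; push_cast
    linarith [Int.le_ceil |α|]
  have hM0 : (0:ℝ) ≤ (M:ℝ) := le_trans (by positivity) hMr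
  have hsub : solSet α ν ⊆ Set.Icc ((-(N * M), 1) : ℤ × ℤ) ((N * M, N) : ℤ × ℤ) := by
    rintro ⟨p, q⟩ hpq
    obtain ⟨hq, habs⟩ := hpq
    have hqN : q < N := hcon (p, q) ⟨hq, habs⟩
    have hq1 : (1:ℝ) ≤ (q:ℝ) := by exact_mod_cast hq
    have hqpos : (0:ℝ) < (q:ℝ) := by linarith
    have hrpow : (1:ℝ) ≤ (q:ℝ) ^ ν := Real.one_le_rpow hq1 hν
    have h1 : 1 / (q:ℝ) ^ ν ≤ 1 := by
      rw [div_le_one (Real.rpow_pos_of_pos hqpos ν)]; exact hrpow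
    have habs1 : |α - (p:ℝ)/(q:ℝ)| < 1 := lt_of_lt_of_le habs h1
    have hpq2 : |(p:ℝ)/(q:ℝ)| ≤ |α| + 1 := by
      have h2 := abs_sub_abs_le_abs_sub ((p:ℝ)/(q:ℝ)) α
      rw [abs_sub_comm] at habs1
      linarith
    have hpbound : |(p:ℝ)| ≤ (q:ℝ) * (|α| + 1) := by
      rw [abs_div] at hpq2
      rw [div_le_iff₀ (by rwa [abs_of_pos hqpos])] at hpq2
      calc |(p:ℝ)| ≤ (|α| + 1) * |(q:ℝ)| := hpq2
        _ = (q:ℝ) * (|α| + 1) := by rw [abs_of_pos hqpos]; ring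
    have hqN' : (q:ℝ) ≤ (N:ℝ) := by exact_mod_cast hqN.le
    have hBreal : (q:ℝ) * (|α| + 1) ≤ ((N * M : ℤ):ℝ) := by
      push_cast
      have step1 : (q:ℝ) * (|α| + 1) ≤ (q:ℝ) * (M:ℝ) :=
        mul_le_mul_of_nonneg_left hMr hqpos.le
      have step2 : (q:ℝ) * (M:ℝ) ≤ (N:ℝ) * (M:ℝ) :=
        mul_le_mul_of_nonneg_right hqN' hM0
      linarith
    have hpB : |p| ≤ N * M := by
      have h3 : ((|p|:ℤ):ℝ) ≤ ((N * M : ℤ):ℝ) := by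
        rw [Int.cast_abs]; exact le_trans hpbound hBreal
      exact_mod_cast h3
    refine Set.mem_Icc.mpr ⟨Prod.mk_le_mk.mpr ⟨?_, hq⟩, Prod.mk_le_mk.mpr ⟨?_, hqN.le⟩⟩
    · exact neg_le_of_abs_le hpB
    · exact le_of_abs_le hpB
  exact (Set.finite_Icc _ _).subset hsub

/-- uniform Diophantine lower bound from finiteness -/
lemma unif_lower (hα : Irrational α) {ν : ℝ} (hν : 1 ≤ ν) (hfin : (solSet α ν).Finite) :
    ∃ c0 : ℝ, 0 < c0 ∧ c0 ≤ 1 ∧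
      ∀ p q : ℤ, 1 ≤ q → c0 * (q:ℝ) ^ (1 - ν) ≤ |α * q - p| := by
  classical
  set F := hfin.toFinset with hF
  set g : ℤ × ℤ → ℝ := fun pq => |α * pq.2 - pq.1| * (pq.2:ℝ) ^ (ν - 1) with hg
  set c0 : ℝ := min 1 (if h : F.Nonempty then F.inf' h g else 1) with hc0
  have hgpos : ∀ pq ∈ F, 0 < g pq := by
    intro pq hpq
    rw [hF, Set.Finite.mem_toFinset] at hpq
    obtain ⟨hq, _⟩ := hpq
    have hq0 : (0:ℝ) < (pq.2:ℝ) := by exact_mod_cast lt_of_lt_of_le zero_lt_one hq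
    have habs : 0 < |α * pq.2 - pq.1| := by
      rw [abs_pos]
      intro h0
      apply hα
      refine ⟨(pq.1 : ℚ) / (pq.2 : ℚ), ?_⟩
      have hq0' : (pq.2:ℝ) ≠ 0 := hq0.ne'
      push_cast
      rw [div_eq_iff hq0']
      linarith
    exact mul_pos habs (Real.rpow_pos_of_pos hq0 _)
  have hc0pos : 0 < c0 := by
    rw [hc0]
    apply lt_min one_pos
    split_ifs with h
    · exact (Finset.lt_inf'_iff h).mpr (fun b hb => hgpos b hb)
    · exact one_pos
  have hc0le : c0 ≤ 1 := min_le_left _ _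
  refine ⟨c0, hc0pos, hc0le, ?_⟩
  intro p q hq
  have hq1 : (1:ℝ) ≤ (q:ℝ) := by exact_mod_cast hq
  have hqpos : (0:ℝ) < (q:ℝ) := by linarith
  have hrpow_pos : (0:ℝ) < (q:ℝ) ^ (1 - ν) := Real.rpow_pos_of_pos hqpos _
  have hprod : (q:ℝ) ^ (ν - 1) * (q:ℝ) ^ (1 - ν) = 1 := by
    rw [← Real.rpow_add hqpos]; norm_num
  by_cases hmem : (p, q) ∈ F
  · have hinf_le : c0 ≤ g (p, q) := by
      rw [hc0]
      refine le_trans (min_le_right _ _) ?_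
      rw [dif_pos ⟨(p,q), hmem⟩]
      exact Finset.inf'_le _ hmem
    rw [hg] at hinf_le
    simp only at hinf_le
    calc c0 * (q:ℝ) ^ (1 - ν) ≤ (|α * q - p| * (q:ℝ) ^ (ν - 1)) * (q:ℝ) ^ (1 - ν) :=
          mul_le_mul_of_nonneg_right hinf_le hrpow_pos.le
      _ = |α * q - p| * ((q:ℝ) ^ (ν - 1) * (q:ℝ) ^ (1 - ν)) := by ring
      _ = |α * q - p| := by rw [hprod, mul_one]
  · have hnotin : (p, q) ∉ solSet α ν := by
      rw [hF, Set.Finite.mem_toFinset] at hmem; exact hmem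
    have hge : 1 / (q:ℝ) ^ ν ≤ |α - (p:ℝ)/(q:ℝ)| := by
      by_contra hcon
      push_neg at hcon
      exact hnotin ⟨hq, hcon⟩
    have he : |α * q - p| = |α - (p:ℝ)/(q:ℝ)| * q := by
      have e0 : (α - (p:ℝ)/(q:ℝ)) * q = α * q - p := by field_simp
      rw [← e0, abs_mul, abs_of_pos hqpos]
    have h2 : (q:ℝ) / (q:ℝ) ^ ν ≤ |α * q - p| := by
      rw [he]
      calc (q:ℝ) / (q:ℝ) ^ ν = (1 / (q:ℝ) ^ ν) * q := by ring
        _ ≤ |α - (p:ℝ)/(q:ℝ)| * q := mul_le_mul_of_nonneg_right hge hqpos.le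
    have h3 : (q:ℝ) ^ (1 - ν) = (q:ℝ) / (q:ℝ) ^ ν := by
      rw [Real.rpow_sub hqpos, Real.rpow_one]
    calc c0 * (q:ℝ) ^ (1 - ν) ≤ 1 * (q:ℝ) ^ (1 - ν) :=
          mul_le_mul_of_nonneg_right hc0le hrpow_pos.le
      _ = (q:ℝ) ^ (1 - ν) := one_mul _
      _ = (q:ℝ) / (q:ℝ) ^ ν := h3
      _ ≤ |α * q - p| := h2

end S14
namespace S14

variable {α ε : ℝ}

lemma maxmin {ν ε t : ℝ} (hν : 1 < ν) (hε : 0 < ε) (ht : 1 ≤ t) :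
    ε ^ ((ν - 1)/ν) ≤ max (ε * t) (t ^ (1 - ν)) := by
  have hν0 : (0:ℝ) < ν := by linarith
  have ht0 : (0:ℝ) < t := by linarith
  rcases le_or_gt (ε ^ (-(1:ℝ)/ν)) t with h | h
  · refine le_trans ?_ (le_max_left _ _)
    have step : ε * ε ^ (-(1:ℝ)/ν) ≤ ε * t := mul_le_mul_of_nonneg_left h hε.le
    refine le_trans (le_of_eq ?_) step
    rw [show ε * ε ^ (-(1:ℝ)/ν) = ε ^ (1:ℝ) * ε ^ (-(1:ℝ)/ν) by rw [Real.rpow_one]]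
    rw [← Real.rpow_add hε]
    congr 1
    field_simp
    ring
  · refine le_trans ?_ (le_max_right _ _)
    have step : (ε ^ (-(1:ℝ)/ν)) ^ (1 - ν) ≤ t ^ (1 - ν) :=
      Real.rpow_le_rpow_of_nonpos ht0 h.le (by linarith)
    refine le_trans (le_of_eq ?_) step
    rw [← Real.rpow_mul hε.le]
    congr 1
    field_simp
    ring

lemma lambda_lower {ν c0 : ℝ} (hν : 2 ≤ ν) (hc0 : 0 < c0) (hc01 : c0 ≤ 1)
    (hD : ∀ p q : ℤ, 1 ≤ q → c0 * (q:ℝ) ^ (1 - ν) ≤ |α * q - p|)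
    (hε : 0 < ε) (hε1 : ε ≤ 1) (hεα : ε * |α| ≤ 1)
    {m n : ℤ} (hmn : ¬(m = 0 ∧ n = 0)) :
    c0 / (Real.sqrt 2 * Real.sqrt (1 + α ^ 2)) * ε ^ ((ν - 1)/ν)
      ≤ normEps α ε ((m:ℝ), (n:ℝ)) := by
  have hS := Spos α
  have hs1 : (1:ℝ) ≤ Real.sqrt (1 + α ^ 2) :=
    (Real.le_sqrt (by norm_num) (by positivity)).mpr (by nlinarith [sq_nonneg α])
  have hs2 : (1:ℝ) ≤ Real.sqrt 2 :=
    (Real.le_sqrt (by norm_num) (by norm_num)).mpr (by norm_num)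
  have hspos : (0:ℝ) < Real.sqrt (1 + α ^ 2) := by linarith
  have h2pos : (0:ℝ) < Real.sqrt 2 := by linarith
  have hεθ1 : ε ^ ((ν - 1)/ν) ≤ 1 := Real.rpow_le_one hε.le hε1
    (div_nonneg (by linarith) (by linarith))
  rcases eq_or_ne m 0 with hm | hm
  · -- m = 0, n ≠ 0 : |w| = |n| ≥ 1
    have hn : n ≠ 0 := fun hn => hmn ⟨hm, hn⟩
    have hw := abs_w_le (α := α) hε ((m:ℝ), (n:ℝ))
    have hwval : |α * (m:ℝ) - (n:ℝ)| = |(n:ℝ)| := by rw [hm]; push_cast; simp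
    have hn1 : (1:ℝ) ≤ |(n:ℝ)| := by
      have hcast : ((|n| : ℤ) : ℝ) = |(n:ℝ)| := by push_cast; ring
      rw [← hcast]
      exact_mod_cast Int.one_le_abs hn
    have hNge : 1 / Real.sqrt (1 + α ^ 2) ≤ normEps α ε ((m:ℝ), (n:ℝ)) := by
      rw [div_le_iff₀ hspos]
      calc (1:ℝ) ≤ |(n:ℝ)| := hn1
        _ = |α * (m:ℝ) - (n:ℝ)| := hwval.symm
        _ ≤ Real.sqrt (1 + α ^ 2) * normEps α ε ((m:ℝ), (n:ℝ)) := hw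
        _ = normEps α ε ((m:ℝ), (n:ℝ)) * Real.sqrt (1 + α ^ 2) := by ring
    refine le_trans ?_ hNge
    rw [div_mul_eq_mul_div, div_le_div_iff₀ (by positivity) hspos]
    have e1 : c0 * ε ^ ((ν - 1)/ν) ≤ 1 := by
      nlinarith [Real.rpow_nonneg hε.le ((ν - 1)/ν)]
    nlinarith [mul_pos h2pos hspos, mul_le_mul_of_nonneg_right e1 hspos.le]
  · -- m ≠ 0
    have hm1 : (1:ℝ) ≤ |(m:ℝ)| := by
      have hcast : ((|m| : ℤ) : ℝ) = |(m:ℝ)| := by push_cast; ring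
      rw [← hcast]
      exact_mod_cast Int.one_le_abs hm
    have hDm : c0 * |(m:ℝ)| ^ (1 - ν) ≤ |α * m - n| := by
      rcases lt_or_gt_of_ne hm with hneg | hpos
      · have h1 : 1 ≤ -m := by omega
        have hthis := hD (-n) (-m) h1
        have e1 : |α * ((-m : ℤ):ℝ) - ((-n : ℤ):ℝ)| = |α * m - n| := by
          push_cast; rw [← abs_neg]; congr 1; ring
        rw [e1] at hthis
        have e2 : |(m:ℝ)| = ((-m : ℤ):ℝ) := by
          push_cast; rw [abs_of_neg (by exact_mod_cast hneg : (m:ℝ) < 0)]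
        rw [e2]
        exact hthis
      · have h1 : 1 ≤ m := hpos
        have e2 : |(m:ℝ)| = (m:ℝ) := abs_of_pos (by exact_mod_cast hpos)
        rw [e2]
        exact hD n m h1
    have hfst := abs_fst_le hε hεα ((m:ℝ), (n:ℝ))
    have hwle := abs_w_le (α := α) hε ((m:ℝ), (n:ℝ))
    set N := normEps α ε ((m:ℝ), (n:ℝ)) with hN
    set t : ℝ := |(m:ℝ)| with htd
    have hN0 : 0 ≤ N := hN ▸ normEps_nonneg _ _ _
    have hmax : c0 * max (ε * t) (t ^ (1 - ν)) ≤ Real.sqrt 2 * Real.sqrt (1 + α ^ 2) * N := by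
      rcases max_cases (ε * t) (t ^ (1 - ν)) with ⟨hc, _⟩ | ⟨hc, _⟩ <;> rw [hc]
      · have hεt0 : (0:ℝ) ≤ ε * t := mul_nonneg hε.le (le_trans zero_le_one hm1)
        calc c0 * (ε * t) ≤ 1 * (ε * t) := mul_le_mul_of_nonneg_right hc01 hεt0
          _ = ε * t := one_mul _
          _ ≤ Real.sqrt 2 * N := hfst
          _ ≤ Real.sqrt 2 * Real.sqrt (1 + α ^ 2) * N := by
              nlinarith [mul_nonneg (mul_nonneg h2pos.le hN0) (sub_nonneg.mpr hs1)]
      · calc c0 * t ^ (1 - ν) ≤ |α * m - n| := hDm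
          _ ≤ Real.sqrt (1 + α ^ 2) * N := hwle
          _ ≤ Real.sqrt 2 * Real.sqrt (1 + α ^ 2) * N := by
              nlinarith [mul_nonneg (mul_nonneg hspos.le hN0) (sub_nonneg.mpr hs2)]
    have hmm := maxmin (by linarith : (1:ℝ) < ν) hε hm1
    have step : c0 * ε ^ ((ν - 1)/ν) ≤ Real.sqrt 2 * Real.sqrt (1 + α ^ 2) * N :=
      le_trans (mul_le_mul_of_nonneg_left hmm hc0.le) hmax
    rw [div_mul_eq_mul_div, div_le_iff₀ (by positivity)]
    calc c0 * ε ^ ((ν - 1)/ν) ≤ Real.sqrt 2 * Real.sqrt (1 + α ^ 2) * N := step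
      _ = N * (Real.sqrt 2 * Real.sqrt (1 + α ^ 2)) := by ring

/-- quantitative diameter upper bound -/
lemma diam_upper_quant {ν c0 : ℝ} (hν : 2 ≤ ν) (hc0 : 0 < c0) (hc01 : c0 ≤ 1)
    (hD : ∀ p q : ℤ, 1 ≤ q → c0 * (q:ℝ) ^ (1 - ν) ≤ |α * q - p|)
    (hε : 0 < ε) (hε1 : ε ≤ 1) (hεα : ε * |α| ≤ 1) :
    diamEps α ε ≤ (3 * (α ^ 2 + 3) + Real.sqrt 2 * Real.sqrt (1 + α ^ 2) / c0) * ε ^ (1/ν) := by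
  have hν0 : (0:ℝ) < ν := by linarith
  have hθpos : (0:ℝ) < (ν - 1)/ν := div_pos (by linarith) hν0
  set θ := (ν - 1)/ν with hθ
  -- Dirichlet denominator bound
  have hεθ : (0:ℝ) < ε ^ (-θ) := Real.rpow_pos_of_pos hε _
  have hεθ1 : (1:ℝ) ≤ ε ^ (-θ) := by
    rw [show (1:ℝ) = ε ^ (0:ℝ) from (Real.rpow_zero ε).symm]
    exact Real.rpow_le_rpow_of_exponent_ge hε hε1 (by linarith)
  set Q : ℕ := ⌈ε ^ (-θ)⌉₊ with hQ
  have hQpos : 0 < Q := by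
    rw [hQ]
    exact Nat.ceil_pos.mpr hεθ
  obtain ⟨j, k, hk0, hkQ, hdio⟩ := Real.exists_int_int_abs_mul_sub_le α hQpos
  have hkR : (k:ℝ) ≤ ε ^ (-θ) + 1 := by
    have h1 : (k:ℝ) ≤ (Q:ℝ) := by exact_mod_cast hkQ
    have h2 : (Q:ℝ) < ε ^ (-θ) + 1 := Nat.ceil_lt_add_one hεθ.le
    linarith
  have hdio2 : |(k:ℝ) * α - j| ≤ ε ^ θ := by
    refine le_trans hdio ?_
    have hQ1 : ε ^ (-θ) ≤ (Q:ℝ) + 1 := by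
      have := Nat.le_ceil (ε ^ (-θ))
      push_cast at this ⊢
      linarith
    have hQ1pos : (0:ℝ) < (Q:ℝ) + 1 := by positivity
    have step : 1 / ((Q:ℝ) + 1) ≤ 1 / ε ^ (-θ) :=
      one_div_le_one_div_of_le hεθ hQ1
    refine le_trans step (le_of_eq ?_)
    rw [Real.rpow_neg hε.le, one_div, inv_inv]
  -- gcd reduction
  set g : ℕ := Int.gcd k j with hg
  have hgpos : 0 < g := by
    rw [hg, Int.gcd_pos_iff]
    left
    exact hk0.ne'
  set a : ℤ := k / (g:ℤ) with ha
  set b : ℤ := j / (g:ℤ) with hb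
  have hgk : (g:ℤ) ∣ k := Int.gcd_dvd_left k j
  have hgj : (g:ℤ) ∣ j := Int.gcd_dvd_right k j
  have hak : a * (g:ℤ) = k := by rw [ha]; exact Int.ediv_mul_cancel hgk
  have hbj : b * (g:ℤ) = j := by rw [hb]; exact Int.ediv_mul_cancel hgj
  have hg1 : (1:ℝ) ≤ (g:ℝ) := by exact_mod_cast hgpos
  have ha1 : 1 ≤ a := by
    rcases lt_or_ge 0 a with h | h
    · exact h
    · exfalso
      have : a * (g:ℤ) ≤ 0 := mul_nonpos_of_nonpos_of_nonneg h (by positivity)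
      rw [hak] at this
      omega
  have hacop : Int.gcd a b = 1 := by
    rw [ha, hb, hg]
    exact Int.gcd_div_gcd_div_gcd (by rwa [← hg])
  have hak' : (a:ℝ) ≤ (k:ℝ) := by
    have : a ≤ k := by nlinarith [hak, ha1, hgpos]
    exact_mod_cast this
  have hdioa : |α * a - b| ≤ ε ^ θ := by
    have e1 : |(k:ℝ) * α - j| = |α * a - b| * (g:ℝ) := by
      have ekk : ((k:ℤ):ℝ) = (a:ℝ) * (g:ℝ) := by rw [← hak]; push_cast; ring
      have ejj : ((j:ℤ):ℝ) = (b:ℝ) * (g:ℝ) := by rw [← hbj]; push_cast; ring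
      rw [ekk, ejj]
      have hgpos' : (0:ℝ) < (g:ℝ) := by linarith
      rw [show (a:ℝ) * (g:ℝ) * α - (b:ℝ) * (g:ℝ) = (α * (a:ℝ) - b) * (g:ℝ) from by ring,
        abs_mul, abs_of_pos hgpos']
    have h2 : |α * a - b| ≤ |α * a - b| * (g:ℝ) := by
      nlinarith [abs_nonneg (α * (a:ℝ) - b)]
    rw [e1] at hdio2
    linarith
  -- Bezout
  obtain ⟨u, v, huv⟩ := (Int.isCoprime_iff_gcd_eq_one.mpr hacop)
  -- a * u + b * v = 1 ; need a*d - b*c = 1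
  have hdet : a * u - b * (-v) = 1 := by linarith [huv]
  -- norm bounds for (a,b)
  have hL_le : normEps α ε ((a:ℝ), (b:ℝ)) ≤ (α ^ 2 + 3) * (3 * ε ^ (1/ν)) := by
    refine le_trans (normEps_int_le hε hεα (a:ℝ) (b:ℝ)) ?_
    have hεa : ε * |(a:ℝ)| ≤ 2 * ε ^ (1/ν) := by
      have ha0 : (0:ℝ) < (a:ℝ) := by exact_mod_cast ha1.trans_lt' zero_lt_one
      rw [abs_of_pos ha0]
      have h1 : ε * (a:ℝ) ≤ ε * (k:ℝ) := mul_le_mul_of_nonneg_left hak' hε.le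
      have h2 : ε * (k:ℝ) ≤ ε * (ε ^ (-θ) + 1) := mul_le_mul_of_nonneg_left hkR hε.le
      have h3 : ε * (ε ^ (-θ) + 1) = ε ^ (1 - θ) + ε := by
        rw [mul_add, mul_one]
        congr 1
        rw [show ε * ε ^ (-θ) = ε ^ (1:ℝ) * ε ^ (-θ) from by rw [Real.rpow_one],
          ← Real.rpow_add hε]
        congr 1
      have h4 : (1:ℝ) - θ = 1/ν := by rw [hθ]; field_simp; ring
      have h5 : ε ≤ ε ^ (1/ν) := by
        calc ε = ε ^ (1:ℝ) := (Real.rpow_one ε).symm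
          _ ≤ ε ^ (1/ν) := Real.rpow_le_rpow_of_exponent_ge hε hε1 (by
              rw [div_le_one hν0]; linarith)
      rw [h4] at h3
      linarith
    have hwb : |α * (a:ℝ) - b| ≤ ε ^ (1/ν) := by
      refine le_trans hdioa ?_
      exact Real.rpow_le_rpow_of_exponent_ge hε hε1 (by
        rw [hθ, div_le_div_iff₀ hν0 hν0]; nlinarith)
    nlinarith [sq_nonneg α, Real.rpow_nonneg hε.le (1/ν)]
  have habne : ¬(a = 0 ∧ b = 0) := fun ⟨h1, _⟩ => by omega
  have hL_ge : c0 / (Real.sqrt 2 * Real.sqrt (1 + α ^ 2)) * ε ^ θ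
      ≤ normEps α ε ((a:ℝ), (b:ℝ)) :=
    lambda_lower hν hc0 hc01 hD hε hε1 hεα habne
  set L := normEps α ε ((a:ℝ), (b:ℝ)) with hLd
  have hLpos : 0 < L := by
    refine lt_of_lt_of_le ?_ hL_ge
    have h1 : (0:ℝ) < Real.sqrt 2 * Real.sqrt (1 + α ^ 2) := by positivity
    positivity
  have hcov := diam_upper (α := α) (a := a) (b := b) (c := -v) (d := u) hε hε1 hdet
  rw [← hLd] at hcov
  refine hcov.trans ?_
  -- ε / L ≤ ε / (cλ ε^θ) = (1/cλ) ε^(1-θ) = (1/cλ) ε^(1/ν)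
  have hclpos : (0:ℝ) < c0 / (Real.sqrt 2 * Real.sqrt (1 + α ^ 2)) := by positivity
  have hden_pos : (0:ℝ) < c0 / (Real.sqrt 2 * Real.sqrt (1 + α ^ 2)) * ε ^ θ := by
    have := Real.rpow_pos_of_pos hε θ
    positivity
  have hεL : ε / L ≤ ε / (c0 / (Real.sqrt 2 * Real.sqrt (1 + α ^ 2)) * ε ^ θ) :=
    div_le_div_of_nonneg_left hε.le hden_pos hL_ge
  have h14 : (1:ℝ) - θ = 1/ν := by rw [hθ]; field_simp; ring
  have hεθν : ε / (c0 / (Real.sqrt 2 * Real.sqrt (1 + α ^ 2)) * ε ^ θ)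
      = Real.sqrt 2 * Real.sqrt (1 + α ^ 2) / c0 * ε ^ (1/ν) := by
    rw [← h14, Real.rpow_sub hε, Real.rpow_one]
    have hsp : (0:ℝ) < Real.sqrt 2 * Real.sqrt (1 + α ^ 2) := by positivity
    have hεθp : (0:ℝ) < ε ^ θ := Real.rpow_pos_of_pos hε θ
    field_simp
  have hfinal1 : L ≤ 3 * (α ^ 2 + 3) * ε ^ (1/ν) := by
    calc L ≤ (α ^ 2 + 3) * (3 * ε ^ (1/ν)) := hL_le
      _ = 3 * (α ^ 2 + 3) * ε ^ (1/ν) := by ring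
  have hfinal2 : ε / L ≤ Real.sqrt 2 * Real.sqrt (1 + α ^ 2) / c0 * ε ^ (1/ν) :=
    hεL.trans (le_of_eq hεθν)
  calc L + ε / L
      ≤ 3 * (α ^ 2 + 3) * ε ^ (1/ν)
        + Real.sqrt 2 * Real.sqrt (1 + α ^ 2) / c0 * ε ^ (1/ν) := by
        linarith
    _ = (3 * (α ^ 2 + 3) + Real.sqrt 2 * Real.sqrt (1 + α ^ 2) / c0) * ε ^ (1/ν) := by ring

end S14
namespace S14

open Filter

variable {α ε : ℝ}

noncomputable def fr (α : ℝ) (ε : ℝ) : ℝ := Real.log (diamEps α ε) / Real.log ε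

lemma diam_ge_half (hε : 0 < ε) (hε1 : ε ≤ 1) : ε / 2 ≤ diamEps α ε := by
  have h := diam_lower (α := α) hε hε1 (a := 0) (b := 1) (by simp)
  have hne : ((((0:ℤ):ℝ), ((1:ℤ):ℝ)) : ℝ × ℝ) ≠ 0 := by
    simp [Prod.ext_iff]
  have hpos : 0 < normEps α ε (((0:ℤ):ℝ), ((1:ℤ):ℝ)) := normEps_pos hε hne
  have hle : normEps α ε (((0:ℤ):ℝ), ((1:ℤ):ℝ)) ≤ 1 := by
    apply sq_dom (normEps_nonneg _ _ _) zero_le_one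
    rw [normEps_sq]
    show (ε ^ 2 * (((0:ℤ):ℝ) + α * ((1:ℤ):ℝ)) ^ 2 + (α * ((0:ℤ):ℝ) - ((1:ℤ):ℝ)) ^ 2)
        / (1 + α ^ 2) ≤ 1 ^ 2
    push_cast
    rw [div_le_iff₀ (Spos α)]
    have hε2 : ε ^ 2 ≤ 1 := by nlinarith
    nlinarith [sq_nonneg α, sq_nonneg (ε * α)]
  refine le_trans ?_ h
  exact div_le_div_of_nonneg_left hε.le (by linarith) (by linarith)

lemma eventually_props (α : ℝ) : ∀ᶠ ε in nhdsWithin (0:ℝ) (Set.Ioi 0),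
    0 < ε ∧ ε ≤ 1/2 ∧ ε * |α| ≤ 1 ∧ 0 < diamEps α ε ∧ diamEps α ε ≤ 0.8 ∧
      Real.log ε < 0 ∧ 0 ≤ fr α ε ∧ fr α ε ≤ 2 ∧ ε / 2 ≤ diamEps α ε := by
  rw [(nhdsGT_basis (0:ℝ)).eventually_iff]
  refine ⟨min (1/2) (1/(1 + |α|)), lt_min (by norm_num) (by positivity), ?_⟩
  rintro ε ⟨h1, h2⟩
  have hA : (0:ℝ) < 1 + |α| := by positivity
  have e2 : ε ≤ 1/2 := (le_min_iff.mp h2.le).1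
  have e4 : ε * (1 + |α|) ≤ 1 := by
    have h3 : ε ≤ 1/(1 + |α|) := (le_min_iff.mp h2.le).2
    rw [le_div_iff₀ hA] at h3
    exact h3
  have e3 : ε * |α| ≤ 1 := by nlinarith [abs_nonneg α, h1.le]
  have hε1 : ε ≤ 1 := by linarith
  have hdge : ε / 2 ≤ diamEps α ε := diam_ge_half h1 hε1
  have hdpos : 0 < diamEps α ε := lt_of_lt_of_le (by linarith) hdge
  have hdle : diamEps α ε ≤ 0.8 := diamEps_le_const h1.le hε1
  have hlogε : Real.log ε < 0 := Real.log_neg h1 (by linarith)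
  have hlogd : Real.log (diamEps α ε) < 0 := Real.log_neg hdpos (by norm_num at hdle ⊢; linarith)
  have hf0 : 0 ≤ fr α ε := by
    unfold fr
    rw [div_nonneg_iff]
    exact Or.inr ⟨hlogd.le, hlogε.le⟩
  have hf2 : fr α ε ≤ 2 := by
    unfold fr
    rw [div_le_iff_of_neg hlogε]
    have hl1 : Real.log (ε/2) ≤ Real.log (diamEps α ε) := Real.log_le_log (by linarith) hdge
    have hl2 : Real.log (ε/2) = Real.log ε - Real.log 2 := by
      rw [Real.log_div h1.ne' (by norm_num)]
    have hl3 : Real.log ε ≤ -Real.log 2 := by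
      have h4 := Real.log_le_log h1 e2
      rwa [show (1:ℝ)/2 = 2⁻¹ from by norm_num, Real.log_inv] at h4
    linarith
  exact ⟨h1, e2, e3, hdpos, hdle, hlogε, hf0, hf2, hdge⟩

lemma diam_lower_quant {ν : ℝ} (hν : 0 < ν) {j k : ℤ} (hk : 1 ≤ k)
    (happ : |α * k - j| ≤ (k:ℝ) ^ (1 - ν))
    (hεdef : ε = (k:ℝ) ^ (-ν)) (hε : 0 < ε) (hε1 : ε ≤ 1) (hεα : ε * |α| ≤ 1) :
    (k:ℝ)⁻¹ / (4 * (α ^ 2 + 3)) ≤ diamEps α ε := by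
  have hkpos : (0:ℝ) < (k:ℝ) := by exact_mod_cast lt_of_lt_of_le zero_lt_one hk
  have hkne : ¬(k = 0 ∧ j = 0) := fun ⟨h, _⟩ => by omega
  have h := diam_lower (α := α) hε hε1 (a := k) (b := j) hkne
  have hkνpos : (0:ℝ) < (k:ℝ) ^ (1 - ν) := Real.rpow_pos_of_pos hkpos _
  have hNle : normEps α ε ((k:ℝ), (j:ℝ)) ≤ (α ^ 2 + 3) * (2 * (k:ℝ) ^ (1 - ν)) := by
    refine le_trans (normEps_int_le hε hεα _ _) ?_
    have h1 : ε * |(k:ℝ)| = (k:ℝ) ^ (1 - ν) := by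
      rw [abs_of_pos hkpos, hεdef]
      rw [show (k:ℝ) ^ (-ν) * (k:ℝ) = (k:ℝ) ^ (-ν) * (k:ℝ) ^ (1:ℝ) from by rw [Real.rpow_one],
        ← Real.rpow_add hkpos]
      congr 1
      ring
    have h2 : |α * (k:ℝ) - j| ≤ (k:ℝ) ^ (1 - ν) := happ
    nlinarith [sq_nonneg α]
  have hNpos : 0 < normEps α ε ((k:ℝ), (j:ℝ)) := by
    apply normEps_pos hε
    intro hcontra
    rw [Prod.ext_iff] at hcontra
    have : (k:ℝ) = 0 := hcontra.1
    exact absurd this hkpos.ne'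
  refine le_trans ?_ h
  have hmono : ε / (2 * ((α ^ 2 + 3) * (2 * (k:ℝ) ^ (1 - ν))))
      ≤ ε / (2 * normEps α ε ((k:ℝ), (j:ℝ))) :=
    div_le_div_of_nonneg_left hε.le (by linarith) (by nlinarith)
  refine le_trans (le_of_eq ?_) hmono
  have hsplit : (k:ℝ) ^ (-ν) = (k:ℝ) ^ (1 - ν) * (k:ℝ)⁻¹ := by
    rw [show (k:ℝ)⁻¹ = (k:ℝ) ^ (-1:ℝ) from by rw [Real.rpow_neg_one],
      ← Real.rpow_add hkpos]
    congr 1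
    ring
  rw [hεdef, hsplit]
  field_simp
  ring

lemma M3 (hα : Irrational α) {c : ℝ} (hc : c < ((irrExp α)⁻¹).toReal) :
    ∀ᶠ ε in nhdsWithin (0:ℝ) (Set.Ioi 0), c ≤ fr α ε := by
  rcases le_or_gt c 0 with hc0 | hc0
  · filter_upwards [eventually_props α] with ε hε
    exact le_trans hc0 hε.2.2.2.2.2.2.1
  · have hμtop : irrExp α ≠ ⊤ := by
      intro h
      rw [h] at hc
      simp at hc
      linarith
    have hμ2 : 2 ≤ irrExp α := irrExp_ge_two hα
    have hμ2' : (2:ℝ) ≤ (irrExp α).toReal := by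
      have h0 := (ENNReal.toReal_le_toReal (by norm_num) hμtop).mpr hμ2
      simpa using h0
    have hrstar : ((irrExp α)⁻¹).toReal = ((irrExp α).toReal)⁻¹ := ENNReal.toReal_inv _
    rw [hrstar] at hc
    set μ := (irrExp α).toReal with hμdef
    have hμpos : 0 < μ := by linarith
    have hμc : μ < 1/c := by
      rw [lt_div_iff₀ hc0]
      calc μ * c = c * μ := by ring
        _ < μ⁻¹ * μ := mul_lt_mul_of_pos_right hc hμpos
        _ = 1 := inv_mul_cancel₀ hμpos.ne'
    set ν := (μ + 1/c)/2 with hν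
    have hνgt : μ < ν := by rw [hν]; linarith
    have hνlt : ν < 1/c := by rw [hν]; linarith
    have hν2 : 2 ≤ ν := by linarith
    have hνpos : (0:ℝ) < ν := by linarith
    have hcν : c < 1/ν := by
      rw [lt_div_iff₀ hνpos]
      calc c * ν < c * (1/c) := by
            apply mul_lt_mul_of_pos_left hνlt hc0
        _ = 1 := by field_simp
    have hfin : (solSet α ν).Finite := finite_of_gt (by
      rw [ENNReal.lt_ofReal_iff_toReal_lt hμtop]
      exact hνgt)
    obtain ⟨c0, hc0p, hc01, hD⟩ := unif_lower hα (by linarith) hfin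
    have hK3pos : (0:ℝ) < 3 * (α ^ 2 + 3) + Real.sqrt 2 * Real.sqrt (1 + α ^ 2) / c0 := by
      positivity
    set K3 := 3 * (α ^ 2 + 3) + Real.sqrt 2 * Real.sqrt (1 + α ^ 2) / c0 with hK3
    have htend : Tendsto (fun ε : ℝ => K3 * ε ^ (1/ν - c)) (nhdsWithin 0 (Set.Ioi 0)) (nhds 0) := by
      have hexp : (0:ℝ) < 1/ν - c := by linarith
      have hbase : Tendsto (fun ε : ℝ => ε ^ (1/ν - c)) (nhds 0) (nhds 0) := by
        have hcont := (Real.continuousAt_rpow_const 0 (1/ν - c) (Or.inr hexp.le)).tendsto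
        rwa [Real.zero_rpow hexp.ne'] at hcont
      have h2 := (hbase.mono_left (nhdsWithin_le_nhds :
        nhdsWithin (0:ℝ) (Set.Ioi 0) ≤ nhds 0)).const_mul K3
      rwa [mul_zero] at h2
    have hev1 : ∀ᶠ ε in nhdsWithin (0:ℝ) (Set.Ioi 0), K3 * ε ^ (1/ν - c) < 1 :=
      htend.eventually_lt_const one_pos
    filter_upwards [eventually_props α, hev1] with ε hprops hK
    obtain ⟨h1, h2, h3, hdpos, hdle, hlogε, hf0, hf2, hdge⟩ := hprops
    have hε1 : ε ≤ 1 := by linarith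
    have hup := diam_upper_quant (α := α) hν2 hc0p hc01 hD h1 hε1 h3
    rw [← hK3] at hup
    have hsplit : ε ^ (1/ν) = ε ^ (1/ν - c) * ε ^ c := by
      rw [← Real.rpow_add h1]
      congr 1
      ring
    have hle : diamEps α ε ≤ ε ^ c := by
      calc diamEps α ε ≤ K3 * ε ^ (1/ν) := hup
        _ = (K3 * ε ^ (1/ν - c)) * ε ^ c := by rw [hsplit]; ring
        _ ≤ 1 * ε ^ c := mul_le_mul_of_nonneg_right hK.le (Real.rpow_nonneg h1.le c)
        _ = ε ^ c := one_mul _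
    have hlog : Real.log (diamEps α ε) ≤ c * Real.log ε := by
      calc Real.log (diamEps α ε) ≤ Real.log (ε ^ c) := Real.log_le_log hdpos hle
        _ = c * Real.log ε := Real.log_rpow h1 c
    unfold fr
    rw [le_div_iff_of_neg hlogε]
    linarith

lemma M4 (hα : Irrational α) {c : ℝ} (hc : ((irrExp α)⁻¹).toReal < c) :
    ∃ᶠ ε in nhdsWithin (0:ℝ) (Set.Ioi 0), fr α ε ≤ c := by
  have hc0 : 0 < c := lt_of_le_of_lt ENNReal.toReal_nonneg hc
  obtain ⟨ν, hν1c, hν1, hνinf⟩ : ∃ ν : ℝ, 1/c < ν ∧ 1 < ν ∧ (solSet α ν).Infinite := by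
    rcases eq_or_ne (irrExp α) ⊤ with htop | htop
    · refine ⟨max 2 (1/c + 1), ?_, ?_, ?_⟩
      · calc 1/c < 1/c + 1 := by linarith
          _ ≤ max 2 (1/c + 1) := le_max_right _ _
      · calc (1:ℝ) < 2 := one_lt_two
          _ ≤ _ := le_max_left _ _
      · apply infinite_of_lt (le_trans (by norm_num : (0:ℝ) ≤ 2) (le_max_left _ _))
        rw [htop]
        exact ENNReal.ofReal_lt_top
    · have hμ2 : 2 ≤ irrExp α := irrExp_ge_two hα
      have hμ2' : (2:ℝ) ≤ (irrExp α).toReal := by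
        have h0 := (ENNReal.toReal_le_toReal (by norm_num) htop).mpr hμ2
        simpa using h0
      have hrstar : ((irrExp α)⁻¹).toReal = ((irrExp α).toReal)⁻¹ := ENNReal.toReal_inv _
      rw [hrstar] at hc
      set μ := (irrExp α).toReal with hμdef
      have hμpos : 0 < μ := by linarith
      have h1c : 1/c < μ := by
        rw [div_lt_iff₀ hc0]
        calc 1 = μ⁻¹ * μ := (inv_mul_cancel₀ hμpos.ne').symm
          _ < c * μ := mul_lt_mul_of_pos_right hc hμpos
          _ = μ * c := by ring
      have h1cpos : (0:ℝ) < 1/c := by positivity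
      refine ⟨(1/c + μ)/2, by linarith, by linarith, ?_⟩
      apply infinite_of_lt (by positivity)
      rw [ENNReal.ofReal_lt_iff_lt_toReal (by positivity) htop]
      linarith
  have hνpos : (0:ℝ) < ν := by linarith
  have hνc1 : 1 < ν * c := by
    rw [div_lt_iff₀ hc0] at hν1c
    linarith
  rw [(nhdsGT_basis (0:ℝ)).frequently_iff]
  intro δ hδ
  have hKpos : (0:ℝ) < α ^ 2 + 3 := by positivity
  set K := α ^ 2 + 3 with hK
  set δ' := min δ (min (1/2) (1/(1 + |α|))) with hδ'
  have hδ'pos : 0 < δ' := lt_min hδ (lt_min (by norm_num) (by positivity))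
  set R := max 2 (max (2/δ') ((4*K) ^ (ν*c - 1)⁻¹)) with hR
  obtain ⟨pq, hmem, hk⟩ := exists_large_denom (by linarith : (0:ℝ) ≤ ν) hνinf ⌈R⌉
  obtain ⟨hkge, habs⟩ := hmem
  set j := pq.1 with hj
  set k := pq.2 with hkd
  have hkR : R ≤ (k:ℝ) := by
    refine le_trans (Int.le_ceil R) ?_
    exact_mod_cast hk
  have hk2 : (2:ℝ) ≤ (k:ℝ) := le_trans (le_max_left _ _) hkR
  have hkpos : (0:ℝ) < (k:ℝ) := by linarith
  have hk1 : 1 ≤ k := by exact_mod_cast (by linarith : (1:ℝ) ≤ (k:ℝ))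
  have happ : |α * k - j| ≤ (k:ℝ) ^ (1 - ν) := by
    have he : |α * k - j| = |α - (j:ℝ)/(k:ℝ)| * k := by
      have e0 : (α - (j:ℝ)/(k:ℝ)) * k = α * k - j := by field_simp
      rw [← e0, abs_mul, abs_of_pos hkpos]
    have h2 : |α - (j:ℝ)/(k:ℝ)| * k ≤ (1/(k:ℝ) ^ ν) * k :=
      mul_le_mul_of_nonneg_right habs.le hkpos.le
    have h3 : (1/(k:ℝ) ^ ν) * k = (k:ℝ) ^ (1 - ν) := by
      rw [Real.rpow_sub hkpos, Real.rpow_one]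
      ring
    rw [he]
    rw [h3] at h2
    exact h2
  obtain ⟨ε, hεdef⟩ : ∃ y : ℝ, y = (k:ℝ) ^ (-ν) := ⟨_, rfl⟩
  have hεpos : 0 < ε := hεdef ▸ Real.rpow_pos_of_pos hkpos _
  have hεk : ε ≤ (k:ℝ)⁻¹ := by
    rw [hεdef, Real.rpow_neg hkpos.le]
    have hmono : (k:ℝ) ≤ (k:ℝ) ^ ν := by
      calc (k:ℝ) = (k:ℝ) ^ (1:ℝ) := (Real.rpow_one _).symm
        _ ≤ (k:ℝ) ^ ν := Real.rpow_le_rpow_of_exponent_le (by linarith) (by linarith)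
    exact inv_anti₀ hkpos hmono
  have hkδ' : (k:ℝ)⁻¹ ≤ δ'/2 := by
    have h2δ : 2/δ' ≤ (k:ℝ) := le_trans (le_trans (le_max_left _ _) (le_max_right _ _)) hkR
    rw [inv_le_comm₀ hkpos (by positivity), inv_div]
    exact h2δ
  have hεδ' : ε ≤ δ'/2 := le_trans hεk hkδ'
  have hδ'δ : δ' ≤ δ := min_le_left _ _
  have hδ'half : δ' ≤ 1/2 := le_trans (min_le_right _ _) (min_le_left _ _)
  have hδ'A : δ' ≤ 1/(1 + |α|) := le_trans (min_le_right _ _) (min_le_right _ _)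
  have hεδ : ε < δ := lt_of_le_of_lt hεδ' (by linarith)
  have hε12 : ε ≤ 1/2 := by linarith
  have hε1 : ε ≤ 1 := by linarith
  have hεα : ε * |α| ≤ 1 := by
    have hA : (0:ℝ) < 1 + |α| := by positivity
    have h5 : ε ≤ 1/(1 + |α|) := by
      have : δ'/2 ≤ δ' := by linarith
      linarith
    rw [le_div_iff₀ hA] at h5
    nlinarith [abs_nonneg α, hεpos.le]
  have hdlow := diam_lower_quant (α := α) hνpos hk1 happ hεdef hεpos hε1 hεα
  rw [← hK] at hdlow
  -- ε^c ≤ k⁻¹/(4K)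
  have hkbig : 4*K ≤ (k:ℝ) ^ (ν*c - 1) := by
    have hbase : (4*K) ^ ((ν*c - 1)⁻¹) ≤ (k:ℝ) :=
      le_trans (le_trans (le_max_right _ _) (le_max_right _ _)) hkR
    have h6 := Real.rpow_le_rpow (Real.rpow_nonneg (by positivity) _) hbase
      (by linarith : (0:ℝ) ≤ ν*c - 1)
    rwa [← Real.rpow_mul (by positivity : (0:ℝ) ≤ 4*K),
      inv_mul_cancel₀ (by linarith : ν*c - 1 ≠ 0), Real.rpow_one] at h6
  have hεcle : ε ^ c ≤ (k:ℝ)⁻¹ / (4*K) := by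
    have hεc : ε ^ c = (k:ℝ) ^ (-(ν*c)) := by
      rw [hεdef, ← Real.rpow_mul hkpos.le]
      congr 1
      ring
    have hsplit2 : (k:ℝ) ^ (-(ν*c)) = (k:ℝ)⁻¹ / (k:ℝ) ^ (ν*c - 1) := by
      rw [show (k:ℝ)⁻¹ = (k:ℝ) ^ (-1:ℝ) from by rw [Real.rpow_neg_one],
        div_eq_mul_inv, ← Real.rpow_neg hkpos.le, ← Real.rpow_add hkpos]
      congr 1
      ring
    rw [hεc, hsplit2]
    exact div_le_div_of_nonneg_left (inv_nonneg.mpr hkpos.le) (by positivity) hkbig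
  have hdge : ε ^ c ≤ diamEps α ε := le_trans hεcle hdlow
  refine ⟨ε, ⟨hεpos, hεδ⟩, ?_⟩
  have hdpos : 0 < diamEps α ε := lt_of_lt_of_le (Real.rpow_pos_of_pos hεpos c) hdge
  have hlogε : Real.log ε < 0 := Real.log_neg hεpos (by linarith)
  unfold fr
  rw [div_le_iff_of_neg hlogε]
  calc c * Real.log ε = Real.log (ε ^ c) := (Real.log_rpow hεpos c).symm
    _ ≤ Real.log (diamEps α ε) := Real.log_le_log (Real.rpow_pos_of_pos hεpos c) hdge

end S14


/-- For the adiabatic collapse `g_ε` of the linear flow of slope `α` (irrational) on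
`T²`, `liminf_{ε→0⁺} ln diam(T², g_ε) / ln ε = 1/μ(α)`. -/
theorem stmt_14 (α : ℝ) (hα : Irrational α) :
    Filter.liminf (fun ε : ℝ => Real.log (diamEps α ε) / Real.log ε)
        (nhdsWithin 0 (Set.Ioi 0)) = ((irrExp α)⁻¹).toReal := by

  have hfr : (fun ε : ℝ => Real.log (diamEps α ε) / Real.log ε) = S14.fr α := rfl
  rw [hfr]
  have hbdd_above : Filter.IsBoundedUnder (· ≤ ·) (nhdsWithin (0:ℝ) (Set.Ioi 0)) (S14.fr α) :=
    ⟨2, Filter.eventually_map.mpr (by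
      filter_upwards [S14.eventually_props α] with ε h
      exact h.2.2.2.2.2.2.2.1)⟩
  have hbdd_below : Filter.IsBoundedUnder (· ≥ ·) (nhdsWithin (0:ℝ) (Set.Ioi 0)) (S14.fr α) :=
    ⟨0, Filter.eventually_map.mpr (by
      filter_upwards [S14.eventually_props α] with ε h
      exact h.2.2.2.2.2.2.1)⟩
  have hcob : Filter.IsCoboundedUnder (· ≥ ·) (nhdsWithin (0:ℝ) (Set.Ioi 0)) (S14.fr α) :=
    hbdd_above.isCoboundedUnder_ge
  apply le_antisymm
  · by_contra hcon
    push_neg at hcon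
    obtain ⟨c, hc1, hc2⟩ := exists_between hcon
    have hle := Filter.liminf_le_of_frequently_le (S14.M4 hα hc1) hbdd_below
    exact absurd hle (not_le.mpr hc2)
  · by_contra hcon
    push_neg at hcon
    obtain ⟨c, hc1, hc2⟩ := exists_between hcon
    have hge := Filter.le_liminf_of_le hcob (S14.M3 hα hc2)
    exact absurd hge (not_le.mpr hc1)
end

section
/- Let T² = ℝ²/ℤ² with the flat metrics g_ε scaled by ε² along the line directed by (1,α), α irrational. Then limsup_{ε→0} ln(injrad(T², g_ε))/ln(ε) = 1 - 1/μ(α). -/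
open scoped ENNReal
open Filter Set Real

/-- The injectivity radius of the flat torus `(T² = ℝ²/ℤ², g_ε)`: half the length of a
shortest nonzero vector of `ℤ²` for the norm `‖·‖_ε`. -/
noncomputable def injradEps (α ε : ℝ) : ℝ :=
  (1 / 2) * sInf {r : ℝ | ∃ p q : ℤ, (p, q) ≠ (0, 0) ∧ r = normEps α ε ((p : ℝ), (q : ℝ))}


lemma one_add_sq_pos (α : ℝ) : (0:ℝ) < 1 + α ^ 2 := by positivity

lemma normEps_nonneg (α ε : ℝ) (x : ℝ × ℝ) : 0 ≤ normEps α ε x := Real.sqrt_nonneg _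

lemma normEps_neg (α ε : ℝ) (x : ℝ × ℝ) : normEps α ε (-x) = normEps α ε x := by
  simp only [normEps, Prod.fst_neg, Prod.snd_neg]
  ring_nf

lemma normEps_mul_sqrt (α ε : ℝ) (x : ℝ × ℝ) :
    normEps α ε x * Real.sqrt (1 + α ^ 2)
      = Real.sqrt (ε ^ 2 * (x.1 + α * x.2) ^ 2 + (α * x.1 - x.2) ^ 2) := by
  rw [normEps, ← Real.sqrt_mul (by positivity), div_mul_cancel₀]
  exact (one_add_sq_pos α).ne'

lemma normEps_ge_eps_mul (α : ℝ) {ε : ℝ} (hε : 0 ≤ ε) (hε1 : ε ≤ 1) (x : ℝ × ℝ) :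
    ε * Real.sqrt (x.1 ^ 2 + x.2 ^ 2) ≤ normEps α ε x := by
  have h : ε * Real.sqrt (x.1 ^ 2 + x.2 ^ 2) = Real.sqrt (ε ^ 2 * (x.1 ^ 2 + x.2 ^ 2)) := by
    rw [Real.sqrt_mul (by positivity), Real.sqrt_sq hε]
  rw [h, normEps]
  apply Real.sqrt_le_sqrt
  rw [le_div_iff₀ (one_add_sq_pos α)]
  have h1 : ε ^ 2 ≤ 1 := by nlinarith
  have key : (x.1 + α * x.2) ^ 2 + (α * x.1 - x.2) ^ 2 = (1 + α ^ 2) * (x.1 ^ 2 + x.2 ^ 2) := by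
    ring
  nlinarith [mul_nonneg (sub_nonneg.2 h1) (sq_nonneg (α * x.1 - x.2))]

lemma normEps_le (α : ℝ) {ε : ℝ} (hε : 0 ≤ ε) (hε1 : ε ≤ 1) (x : ℝ × ℝ) :
    normEps α ε x ≤ Real.sqrt (x.1 ^ 2 + x.2 ^ 2) := by
  apply Real.sqrt_le_sqrt
  rw [div_le_iff₀ (one_add_sq_pos α)]
  have h1 : ε ^ 2 ≤ 1 := by nlinarith
  have key : (x.1 + α * x.2) ^ 2 + (α * x.1 - x.2) ^ 2 = (1 + α ^ 2) * (x.1 ^ 2 + x.2 ^ 2) := by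
    ring
  nlinarith [mul_nonneg (sub_nonneg.2 h1) (sq_nonneg (x.1 + α * x.2))]

lemma normEps_ge_orth (α ε : ℝ) (x : ℝ × ℝ) :
    |α * x.1 - x.2| ≤ normEps α ε x * Real.sqrt (1 + α ^ 2) := by
  rw [normEps_mul_sqrt, ← Real.sqrt_sq_eq_abs]
  exact Real.sqrt_le_sqrt (by nlinarith [sq_nonneg (ε * (x.1 + α * x.2))])

lemma normEps_ge_par (α : ℝ) {ε : ℝ} (hε : 0 ≤ ε) (x : ℝ × ℝ) :
    ε * |x.1 + α * x.2| ≤ normEps α ε x * Real.sqrt (1 + α ^ 2) := by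
  rw [normEps_mul_sqrt]
  have : ε * |x.1 + α * x.2| = Real.sqrt (ε ^ 2 * (x.1 + α * x.2) ^ 2) := by
    rw [Real.sqrt_mul (by positivity), Real.sqrt_sq hε, Real.sqrt_sq_eq_abs]
  rw [this]
  exact Real.sqrt_le_sqrt (by nlinarith [sq_nonneg (α * x.1 - x.2)])

lemma c_pos (α : ℝ) : 0 < (1 + α ^ 2 - |α|) / (1 + α ^ 2) := by
  apply div_pos _ (one_add_sq_pos α)
  nlinarith [sq_abs α, sq_nonneg (|α| - 1)]

lemma c_le_one (α : ℝ) : (1 + α ^ 2 - |α|) / (1 + α ^ 2) ≤ 1 := by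
  rw [div_le_one (one_add_sq_pos α)]
  have := abs_nonneg α; linarith

/-- Key geometric estimate. -/
lemma normEps_key (α : ℝ) {ε : ℝ} (hε : 0 ≤ ε) (hε1 : ε ≤ 1) (x : ℝ × ℝ) :
    max (ε * ((1 + α ^ 2 - |α|) / (1 + α ^ 2)) * |x.1|) |α * x.1 - x.2|
      ≤ normEps α ε x * Real.sqrt (1 + α ^ 2) := by
  set c := (1 + α ^ 2 - |α|) / (1 + α ^ 2) with hc
  set v := α * x.1 - x.2 with hv
  apply max_le _ (normEps_ge_orth α ε x)
  rcases le_or_gt |x.1| |v| with h | h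
  · have hce : ε * c ≤ 1 := by
      rw [hc]; nlinarith [(c_pos α).le, c_le_one α]
    calc ε * c * |x.1| ≤ 1 * |x.1| := mul_le_mul_of_nonneg_right hce (abs_nonneg _)
    _ = |x.1| := one_mul _
    _ ≤ |v| := h
    _ ≤ _ := normEps_ge_orth α ε x
  · have hpar : (1 + α ^ 2 - |α|) * |x.1| ≤ |x.1 + α * x.2| := by
      have h1 : x.1 + α * x.2 = (1 + α ^ 2) * x.1 - α * v := by rw [hv]; ring
      have h2 : |(1 + α ^ 2) * x.1| - |α * v| ≤ |(1 + α ^ 2) * x.1 - α * v| :=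
        abs_sub_abs_le_abs_sub _ _
      rw [h1]
      rw [abs_mul, abs_mul] at h2
      have h3 : |(1:ℝ) + α ^ 2| = 1 + α ^ 2 := abs_of_pos (one_add_sq_pos α)
      rw [h3] at h2
      nlinarith [abs_nonneg α, abs_nonneg x.1, h.le]
    have hc2 : c ≤ 1 + α ^ 2 - |α| := by
      rw [hc, div_le_iff₀ (one_add_sq_pos α)]
      have hpos : 0 < 1 + α ^ 2 - |α| := by nlinarith [sq_abs α, sq_nonneg (|α| - 1)]
      nlinarith [sq_nonneg α]
    have h4 : c * |x.1| ≤ (1 + α ^ 2 - |α|) * |x.1| :=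
      mul_le_mul_of_nonneg_right hc2 (abs_nonneg x.1)
    calc ε * c * |x.1| = ε * (c * |x.1|) := by ring
    _ ≤ ε * ((1 + α ^ 2 - |α|) * |x.1|) := mul_le_mul_of_nonneg_left h4 hε
    _ ≤ ε * |x.1 + α * x.2| := by
          apply mul_le_mul_of_nonneg_left hpar hε
    _ ≤ _ := normEps_ge_par α hε x

/-- Interpolation: `x^θ y^(1-θ) ≤ max x y`. -/
lemma max_interp {x y θ : ℝ} (hx : 0 < x) (hy : 0 < y) (hθ0 : 0 ≤ θ) (hθ1 : θ ≤ 1) :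
    x ^ θ * y ^ (1 - θ) ≤ max x y := by
  have hm : 0 < max x y := lt_max_of_lt_left hx
  calc x ^ θ * y ^ (1 - θ)
      ≤ (max x y) ^ θ * (max x y) ^ (1 - θ) := by
        apply mul_le_mul (Real.rpow_le_rpow hx.le (le_max_left _ _) hθ0)
          (Real.rpow_le_rpow hy.le (le_max_right _ _) (by linarith))
          (Real.rpow_nonneg hy.le _) (Real.rpow_nonneg hm.le _)
    _ = (max x y) ^ (θ + (1 - θ)) := (Real.rpow_add hm _ _).symm
    _ = max x y := by norm_num

/-- Diophantine lower bound from finiteness of the solution set. -/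
lemma dioph_lower (α ν : ℝ) (hirr : Irrational α)
    (hfin : {pq : ℤ × ℤ | 1 ≤ pq.2 ∧
      |α - (pq.1 : ℝ) / (pq.2 : ℝ)| < 1 / (pq.2 : ℝ) ^ ν}.Finite) :
    ∃ C : ℝ, 0 < C ∧ C ≤ 1 ∧ ∀ p q : ℤ, 1 ≤ q →
      C * (q : ℝ) ^ (1 - ν) ≤ |(q : ℝ) * α - (p : ℝ)| := by
  classical
  set w : ℤ × ℤ → ℝ := fun pq => |(pq.2 : ℝ) * α - (pq.1 : ℝ)| / (pq.2 : ℝ) ^ (1 - ν) with hw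
  set s : Finset ℝ := insert 1 (hfin.toFinset.image w) with hs
  have hsne : s.Nonempty := ⟨1, Finset.mem_insert_self _ _⟩
  set C := s.min' hsne with hC
  have hqpos : ∀ q : ℤ, 1 ≤ q → (0:ℝ) < (q:ℝ) := fun q hq => by exact_mod_cast hq
  have hne : ∀ p q : ℤ, 1 ≤ q → (q:ℝ) * α - (p:ℝ) ≠ 0 := by
    intro p q hq h
    have hq0 : (q : ℝ) ≠ 0 := (hqpos q hq).ne'
    apply hirr
    exact ⟨(p : ℚ) / (q : ℚ), by push_cast; field_simp at h ⊢; linarith⟩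
  refine ⟨C, ?_, ?_, ?_⟩
  · -- positivity
    have hpos : ∀ r ∈ s, 0 < r := by
      intro r hr
      rw [hs] at hr
      rcases Finset.mem_insert.1 hr with h | h
      · rw [h]; norm_num
      · rcases Finset.mem_image.1 h with ⟨pq, hmem, heq⟩
        rw [Set.Finite.mem_toFinset] at hmem
        rw [← heq, hw]
        apply div_pos (abs_pos.2 (hne pq.1 pq.2 hmem.1))
        exact Real.rpow_pos_of_pos (hqpos pq.2 hmem.1) _
    exact hpos _ (s.min'_mem hsne)
  · exact s.min'_le 1 (Finset.mem_insert_self _ _)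
  · intro p q hq
    have hq' := hqpos q hq
    by_cases hmem : (p, q) ∈ {pq : ℤ × ℤ | 1 ≤ pq.2 ∧
        |α - (pq.1 : ℝ) / (pq.2 : ℝ)| < 1 / (pq.2 : ℝ) ^ ν}
    · have hCle : C ≤ w (p, q) := by
        apply s.min'_le
        rw [hs]
        exact Finset.mem_insert_of_mem (Finset.mem_image.2 ⟨(p, q), (Set.Finite.mem_toFinset hfin).2 hmem, rfl⟩)
      have := mul_le_mul_of_nonneg_right hCle (Real.rpow_pos_of_pos hq' (1 - ν)).le
      rwa [hw, div_mul_cancel₀] at this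
      exact (Real.rpow_pos_of_pos hq' _).ne'
    · have hge : 1 / (q : ℝ) ^ ν ≤ |α - (p : ℝ) / (q : ℝ)| := by
        simp only [Set.mem_setOf_eq, hq, true_and, not_lt] at hmem
        exact hmem
      have key : |(q:ℝ) * α - p| = (q:ℝ) * |α - (p:ℝ)/(q:ℝ)| := by
        have heq2 : (q:ℝ) * α - p = (q:ℝ) * (α - (p:ℝ)/(q:ℝ)) := by field_simp
        rw [heq2, abs_mul, abs_of_pos hq']
      have hrw : (q:ℝ) * (1 / (q:ℝ) ^ ν) = (q:ℝ) ^ (1 - ν) := by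
        rw [Real.rpow_sub hq', Real.rpow_one]
        field_simp
      calc C * (q:ℝ) ^ (1 - ν) ≤ 1 * (q:ℝ) ^ (1 - ν) := by
            apply mul_le_mul_of_nonneg_right (s.min'_le 1 (Finset.mem_insert_self _ _))
              (Real.rpow_pos_of_pos hq' _).le
        _ = (q:ℝ) * (1 / (q:ℝ) ^ ν) := by rw [hrw, one_mul]
        _ ≤ (q:ℝ) * |α - (p:ℝ)/(q:ℝ)| := by
            apply mul_le_mul_of_nonneg_left hge hq'.le
        _ = |(q:ℝ) * α - p| := key.symm

lemma interp_calc {ε c C p ν : ℝ} (hε : 0 < ε) (hc : 0 < c) (hC : 0 < C) (hp : 0 < p)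
    (hν : 1 < ν) :
    c ^ (1 - 1/ν) * C ^ (1/ν) * ε ^ (1 - 1/ν) ≤ max (ε * c * p) (C * p ^ (1 - ν)) := by
  have hν0 : (0:ℝ) < ν := by linarith
  have hθ0 : (0:ℝ) ≤ 1 - 1/ν := by
    have : 1/ν ≤ 1 := by rw [div_le_one hν0]; linarith
    linarith
  have hθ1 : (1:ℝ) - 1/ν ≤ 1 := by
    have : (0:ℝ) ≤ 1/ν := by positivity
    linarith
  have h := max_interp (show (0:ℝ) < ε * c * p by positivity)
    (show (0:ℝ) < C * p ^ (1 - ν) by positivity) hθ0 hθ1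
  refine le_trans (le_of_eq ?_) h
  have h1 : (1:ℝ) - (1 - 1/ν) = 1/ν := by ring
  rw [h1, Real.mul_rpow (by positivity) hp.le, Real.mul_rpow hε.le hc.le,
    Real.mul_rpow hC.le (Real.rpow_pos_of_pos hp _).le, ← Real.rpow_mul hp.le]
  have h2 : p ^ ((1:ℝ) - 1/ν) * p ^ ((1 - ν) * (1/ν)) = 1 := by
    rw [← Real.rpow_add hp]
    have he : (1 - 1/ν) + (1 - ν) * (1/ν) = 0 := by field_simp; ring
    rw [he, Real.rpow_zero]
  rw [show ε ^ (1 - 1/ν) * c ^ (1 - 1/ν) * p ^ (1 - 1/ν) * (C ^ (1/ν) * p ^ ((1 - ν) * (1/ν)))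
      = c ^ (1 - 1/ν) * C ^ (1/ν) * ε ^ (1 - 1/ν) * (p ^ ((1:ℝ) - 1/ν) * p ^ ((1 - ν) * (1/ν)))
      from by ring, h2, mul_one]

/-- Lower bound for every element of the shortest-vector set. -/
lemma elem_lower (α ν : ℝ) (hirr : Irrational α) (hν : 1 < ν)
    (hfin : {pq : ℤ × ℤ | 1 ≤ pq.2 ∧
      |α - (pq.1 : ℝ) / (pq.2 : ℝ)| < 1 / (pq.2 : ℝ) ^ ν}.Finite) :
    ∃ C : ℝ, 0 < C ∧ ∀ ε : ℝ, 0 < ε → ε ≤ 1 → ∀ p q : ℤ, (p, q) ≠ (0, 0) →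
      C * ε ^ (1 - 1/ν) ≤ normEps α ε ((p : ℝ), (q : ℝ)) := by
  obtain ⟨C₀, hC₀, hC₀1, hdioph⟩ := dioph_lower α ν hirr hfin
  set c := (1 + α ^ 2 - |α|) / (1 + α ^ 2) with hcdef
  have hc := c_pos α
  have hsq : (0:ℝ) < Real.sqrt (1 + α ^ 2) := Real.sqrt_pos.2 (one_add_sq_pos α)
  set K : ℝ := c ^ (1 - 1/ν) * C₀ ^ (1/ν) / Real.sqrt (1 + α ^ 2) with hKdef
  have hK : 0 < K := by
    apply div_pos _ hsq
    positivity
  refine ⟨min K (1 / Real.sqrt (1 + α ^ 2)), lt_min hK (by positivity), ?_⟩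
  intro ε hε hε1 p q hpq
  have hθ0 : (0:ℝ) ≤ 1 - 1/ν := by
    have : 1/ν ≤ 1 := by rw [div_le_one (by linarith)]; linarith
    linarith
  -- core estimate for 1 ≤ p
  have core : ∀ p q : ℤ, 1 ≤ p →
      min K (1 / Real.sqrt (1 + α ^ 2)) * ε ^ (1 - 1/ν)
        ≤ normEps α ε ((p : ℝ), (q : ℝ)) := by
    intro p q hp
    have hp' : (0:ℝ) < (p:ℝ) := by exact_mod_cast hp
    have hA : K * Real.sqrt (1 + α ^ 2) * ε ^ (1 - 1/ν)
        ≤ normEps α ε ((p:ℝ), (q:ℝ)) * Real.sqrt (1 + α ^ 2) := by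
      have step1 := interp_calc hε hc hC₀ hp' hν
      have step2 : max (ε * c * (p:ℝ)) (C₀ * (p:ℝ) ^ (1 - ν))
          ≤ max (ε * c * |(p:ℝ)|) |α * (p:ℝ) - (q:ℝ)| := by
        apply max_le_max
        · rw [abs_of_pos hp']
        · have := hdioph q p hp
          rwa [show ((p:ℝ)) * α = α * (p:ℝ) from mul_comm _ _] at this
      have step3 := normEps_key α hε.le hε1 ((p:ℝ), (q:ℝ))
      simp only at step3
      have : K * Real.sqrt (1 + α ^ 2) * ε ^ (1 - 1/ν)
          = c ^ (1 - 1/ν) * C₀ ^ (1/ν) * ε ^ (1 - 1/ν) := by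
        rw [hKdef]; field_simp
      rw [this]
      exact le_trans (le_trans step1 step2) step3
    apply le_of_mul_le_mul_right _ hsq
    calc min K (1 / Real.sqrt (1 + α ^ 2)) * ε ^ (1 - 1/ν) * Real.sqrt (1 + α ^ 2)
        ≤ K * ε ^ (1 - 1/ν) * Real.sqrt (1 + α ^ 2) := by
          apply mul_le_mul_of_nonneg_right _ hsq.le
          exact mul_le_mul_of_nonneg_right (min_le_left _ _) (Real.rpow_nonneg hε.le _)
    _ = K * Real.sqrt (1 + α ^ 2) * ε ^ (1 - 1/ν) := by ring
    _ ≤ _ := hA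
  rcases lt_trichotomy p 0 with hp | hp | hp
  · have h1 : 1 ≤ -p := by omega
    have := core (-p) (-q) h1
    rwa [show (((-p : ℤ) : ℝ), ((-q : ℤ) : ℝ)) = -(((p:ℤ):ℝ), ((q:ℤ):ℝ)) from by
      push_cast; rfl, normEps_neg] at this
  · -- p = 0, q ≠ 0
    subst hp
    have hq : q ≠ 0 := by
      intro h; exact hpq (by rw [h])
    have hq1 : (1:ℝ) ≤ |(q:ℝ)| := by
      rw [← Int.cast_abs]
      exact_mod_cast Int.one_le_abs hq
    have horth := normEps_ge_orth α ε ((0:ℝ), ((q:ℤ):ℝ))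
    simp only [mul_zero, zero_sub, abs_neg] at horth
    simp only [Int.cast_zero]
    have h2 : (1:ℝ) ≤ normEps α ε ((0:ℝ), ((q:ℤ):ℝ)) * Real.sqrt (1 + α ^ 2) :=
      le_trans hq1 horth
    calc min K (1 / Real.sqrt (1 + α ^ 2)) * ε ^ (1 - 1/ν)
        ≤ (1 / Real.sqrt (1 + α ^ 2)) * 1 := by
          apply mul_le_mul (min_le_right _ _) (Real.rpow_le_one hε.le hε1 hθ0)
            (Real.rpow_nonneg hε.le _) (by positivity)
      _ = 1 / Real.sqrt (1 + α ^ 2) := mul_one _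
      _ ≤ normEps α ε ((0:ℝ), ((q:ℤ):ℝ)) := by
          rw [div_le_iff₀ hsq]
          exact h2
  · exact core p q hp


lemma vecSet_nonempty (α ε : ℝ) :
    {r : ℝ | ∃ p q : ℤ, (p, q) ≠ (0, 0) ∧ r = normEps α ε ((p : ℝ), (q : ℝ))}.Nonempty :=
  ⟨normEps α ε ((1 : ℝ), (0 : ℝ)), 1, 0, by norm_num, by norm_num⟩

lemma vecSet_bddBelow (α ε : ℝ) :
    BddBelow {r : ℝ | ∃ p q : ℤ, (p, q) ≠ (0, 0) ∧ r = normEps α ε ((p : ℝ), (q : ℝ))} := by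
  refine ⟨0, fun r hr => ?_⟩
  obtain ⟨p, q, _, rfl⟩ := hr
  exact normEps_nonneg _ _ _

lemma injradEps_le (α ε : ℝ) (p q : ℤ) (hpq : (p, q) ≠ (0, 0)) :
    injradEps α ε ≤ (1 / 2) * normEps α ε ((p : ℝ), (q : ℝ)) := by
  have hmem : normEps α ε ((p : ℝ), (q : ℝ)) ∈
      {r : ℝ | ∃ p q : ℤ, (p, q) ≠ (0, 0) ∧ r = normEps α ε ((p : ℝ), (q : ℝ))} :=
    ⟨p, q, hpq, rfl⟩
  have h := csInf_le (vecSet_bddBelow α ε) hmem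
  rw [injradEps]
  linarith

lemma injradEps_ge (α ε b : ℝ)
    (h : ∀ p q : ℤ, (p, q) ≠ (0, 0) → b ≤ normEps α ε ((p : ℝ), (q : ℝ))) :
    (1 / 2) * b ≤ injradEps α ε := by
  rw [injradEps]
  have := le_csInf (vecSet_nonempty α ε) (fun r hr => by
    obtain ⟨p, q, hpq, rfl⟩ := hr; exact h p q hpq)
  linarith

lemma one_le_sq_sum (p q : ℤ) (hpq : (p, q) ≠ (0, 0)) :
    (1 : ℝ) ≤ (p : ℝ) ^ 2 + (q : ℝ) ^ 2 := by
  have h : (1 : ℤ) ≤ p ^ 2 + q ^ 2 := by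
    rcases eq_or_ne p 0 with hp | hp
    · have hq : q ≠ 0 := fun h => hpq (by rw [hp, h])
      nlinarith [Int.one_le_abs hq, sq_abs q, sq_nonneg p]
    · nlinarith [Int.one_le_abs hp, sq_abs p, sq_nonneg q]
  exact_mod_cast h

lemma injrad_ge_eps (α : ℝ) {ε : ℝ} (hε : 0 < ε) (hε1 : ε ≤ 1) :
    ε / 2 ≤ injradEps α ε := by
  have hb : ∀ p q : ℤ, (p, q) ≠ (0, 0) → ε ≤ normEps α ε ((p : ℝ), (q : ℝ)) := by
    intro p q hpq
    have h1 : (1:ℝ) ≤ Real.sqrt ((p : ℝ) ^ 2 + (q : ℝ) ^ 2) := by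
      rw [show (1:ℝ) = Real.sqrt 1 from (Real.sqrt_one).symm]
      exact Real.sqrt_le_sqrt (one_le_sq_sum p q hpq)
    have h2 : ε * 1 ≤ ε * Real.sqrt ((p : ℝ) ^ 2 + (q : ℝ) ^ 2) :=
      mul_le_mul_of_nonneg_left h1 hε.le
    have h3 := normEps_ge_eps_mul α hε.le hε1 ((p : ℝ), (q : ℝ))
    simp only at h3
    rw [mul_one] at h2
    linarith
  have h := injradEps_ge α ε ε hb
  linarith

lemma injrad_le_half (α : ℝ) {ε : ℝ} (hε : 0 ≤ ε) (hε1 : ε ≤ 1) :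
    injradEps α ε ≤ 1 / 2 := by
  have h := injradEps_le α ε 0 1 (by norm_num)
  have h2 : normEps α ε ((0 : ℝ), (1 : ℝ)) ≤ 1 := by
    have := normEps_le α hε hε1 ((0 : ℝ), (1 : ℝ))
    simpa using this
  calc injradEps α ε ≤ (1/2) * normEps α ε (((0:ℤ) : ℝ), ((1:ℤ) : ℝ)) := h
  _ ≤ 1/2 := by push_cast; linarith

lemma injrad_pos (α : ℝ) {ε : ℝ} (hε : 0 < ε) (hε1 : ε ≤ 1) : 0 < injradEps α ε :=
  lt_of_lt_of_le (by linarith : (0:ℝ) < ε / 2) (injrad_ge_eps α hε hε1)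

/-- generic upper bound on the limsup from a power-law lower bound on the injectivity
radius. -/
lemma limsup_upper_of_bound (α C θ : ℝ) (hC : 0 < C) (hθ : 0 ≤ θ)
    (hbd : ∀ ε : ℝ, 0 < ε → ε ≤ 1 → C * ε ^ θ ≤ injradEps α ε) :
    Filter.limsup (fun ε : ℝ => Real.log (injradEps α ε) / Real.log ε)
      (nhdsWithin 0 (Set.Ioi 0)) ≤ θ := by
  set f : ℝ → ℝ := fun ε => Real.log (injradEps α ε) / Real.log ε with hf
  -- coboundedness: eventually f ≥ 0
  have hev0 : ∀ᶠ ε in nhdsWithin (0:ℝ) (Set.Ioi 0), 0 ≤ f ε := by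
    filter_upwards [Ioo_mem_nhdsGT_of_mem (show (0:ℝ) ∈ Set.Ico (0:ℝ) (1/2) by norm_num)]
      with ε hε
    have h1 : Real.log ε < 0 := Real.log_neg hε.1 (by linarith [hε.2])
    have h2 : Real.log (injradEps α ε) ≤ 0 := by
      apply Real.log_nonpos (injrad_pos α hε.1 (by linarith [hε.2])).le
      linarith [injrad_le_half α hε.1.le (by linarith [hε.2] : ε ≤ 1)]
    rw [div_nonneg_iff]
    exact Or.inr ⟨h2, h1.le⟩
  have hcobdd : Filter.IsCoboundedUnder (· ≤ ·) (nhdsWithin (0:ℝ) (Set.Ioi 0)) f :=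
    Filter.IsBoundedUnder.isCoboundedUnder_le ⟨0, by
      rw [Filter.eventually_map]; exact hev0⟩
  apply le_of_forall_pos_le_add
  intro η hη
  apply Filter.limsup_le_of_le hcobdd
  have hδ : (0:ℝ) < min (1/2) (Real.exp (Real.log C / η)) := by positivity
  filter_upwards [Ioo_mem_nhdsGT_of_mem
    (show (0:ℝ) ∈ Set.Ico (0:ℝ) (min (1/2) (Real.exp (Real.log C / η))) from ⟨le_refl _, hδ⟩)]
    with ε hε
  have hε0 : 0 < ε := hε.1
  have hεhalf : ε < 1/2 := lt_of_lt_of_le hε.2 (min_le_left _ _)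
  have hε1 : ε ≤ 1 := by linarith
  have hlogε : Real.log ε < 0 := Real.log_neg hε0 (by linarith)
  have hloglog : Real.log ε < Real.log C / η := by
    calc Real.log ε < Real.log (Real.exp (Real.log C / η)) := by
          apply Real.log_lt_log hε0
          exact lt_of_lt_of_le hε.2 (min_le_right _ _)
    _ = Real.log C / η := Real.log_exp _
  have hkey : η * Real.log ε ≤ Real.log C := by
    have := (lt_div_iff₀ hη).1 hloglog
    linarith
  -- log inj ≥ log C + θ log ε
  have hlog : Real.log C + θ * Real.log ε ≤ Real.log (injradEps α ε) := by
    have h1 : Real.log (C * ε ^ θ) ≤ Real.log (injradEps α ε) :=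
      Real.log_le_log (by positivity) (hbd ε hε0 hε1)
    rwa [Real.log_mul hC.ne' (by positivity : ε ^ θ ≠ 0), Real.log_rpow hε0] at h1
  rw [hf]
  show Real.log (injradEps α ε) / Real.log ε ≤ θ + η
  rw [div_le_iff_of_neg hlogε]
  calc (θ + η) * Real.log ε = θ * Real.log ε + η * Real.log ε := by ring
  _ ≤ θ * Real.log ε + Real.log C := by linarith
  _ ≤ Real.log (injradEps α ε) := by linarith

/-- second coordinates in the solution set are unbounded. -/
lemma exists_large_q (α ν : ℝ) (hν : 0 < ν)
    (hinf : {pq : ℤ × ℤ | 1 ≤ pq.2 ∧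
      |α - (pq.1 : ℝ) / (pq.2 : ℝ)| < 1 / (pq.2 : ℝ) ^ ν}.Infinite) (N : ℤ) :
    ∃ p q : ℤ, 1 ≤ q ∧ N ≤ q ∧ |α - (p : ℝ) / (q : ℝ)| < 1 / (q : ℝ) ^ ν := by
  by_contra hcon
  push_neg at hcon
  set S := {pq : ℤ × ℤ | 1 ≤ pq.2 ∧ |α - (pq.1 : ℝ) / (pq.2 : ℝ)| < 1 / (pq.2 : ℝ) ^ ν}
  set K : ℤ := N * (⌈|α|⌉ + 1) with hK
  have hsub : S ⊆ Set.Icc (-K) K ×ˢ Set.Icc 1 N := by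
    rintro ⟨p, q⟩ ⟨hq1, habs⟩
    have hqN : q < N := by
      by_contra hqN
      push_neg at hqN
      exact absurd habs (not_lt.2 (by
        have := hcon p q hq1 hqN
        linarith))
    have hq' : (0:ℝ) < (q:ℝ) := by exact_mod_cast hq1
    have hN' : (1:ℝ) ≤ (N:ℝ) := by
      have : (1:ℤ) ≤ N := le_trans hq1 hqN.le
      exact_mod_cast this
    -- 1/q^ν ≤ 1
    have hle1 : 1 / (q : ℝ) ^ ν ≤ 1 := by
      rw [div_le_one (Real.rpow_pos_of_pos hq' ν)]
      exact Real.one_le_rpow (by exact_mod_cast hq1) hν.le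
    have hda : |α - (p:ℝ)/(q:ℝ)| < 1 := lt_of_lt_of_le habs hle1
    have hpq_abs : |(p:ℝ)/(q:ℝ)| < |α| + 1 := by
      calc |(p:ℝ)/(q:ℝ)| ≤ |(p:ℝ)/(q:ℝ) - α| + |α| := by
            have := abs_sub_abs_le_abs_sub ((p:ℝ)/(q:ℝ)) α
            have h2 := abs_nonneg ((p:ℝ)/(q:ℝ) - α)
            linarith [abs_sub_comm ((p:ℝ)/(q:ℝ)) α ▸ (le_refl |(p:ℝ)/(q:ℝ) - α|)]
      _ < |α| + 1 := by
            rw [abs_sub_comm] at hda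
            linarith
    have hceil : |α| ≤ (⌈|α|⌉ : ℝ) := Int.le_ceil _
    have hp_bound : |(p:ℝ)| < (q:ℝ) * ((⌈|α|⌉:ℝ) + 1) := by
      have h1 : |(p:ℝ)| = |(p:ℝ)/(q:ℝ)| * (q:ℝ) := by
        rw [abs_div, abs_of_pos hq']
        field_simp
      rw [h1]
      have h2 : |(p:ℝ)/(q:ℝ)| < (⌈|α|⌉:ℝ) + 1 := by linarith
      exact (mul_lt_mul_of_pos_right h2 hq').trans_le (le_of_eq (mul_comm _ _))
    have hqN' : (q:ℝ) ≤ (N:ℝ) := by exact_mod_cast hqN.le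
    have hc1 : (0:ℝ) ≤ (⌈|α|⌉:ℝ) + 1 := by positivity
    have hKreal : |(p:ℝ)| ≤ (K:ℝ) := by
      have : (q:ℝ) * ((⌈|α|⌉:ℝ) + 1) ≤ (N:ℝ) * ((⌈|α|⌉:ℝ) + 1) :=
        mul_le_mul_of_nonneg_right hqN' hc1
      have hKr : (K:ℝ) = (N:ℝ) * ((⌈|α|⌉:ℝ) + 1) := by rw [hK]; push_cast; ring
      linarith
    have hpK : |p| ≤ K := by exact_mod_cast hKreal
    refine ⟨⟨?_, ?_⟩, hq1, hqN.le⟩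
    · linarith [abs_le.1 hpK |>.1]
    · exact abs_le.1 hpK |>.2
  exact hinf (Set.Finite.subset ((Set.finite_Icc _ _).prod (Set.finite_Icc _ _)) hsub)

lemma normEps_upper (α : ℝ) {ε : ℝ} (hε : 0 ≤ ε) (x : ℝ × ℝ) :
    normEps α ε x ≤ ε * |x.1 + α * x.2| + |α * x.1 - x.2| := by
  rw [normEps]
  have h0 : (0:ℝ) ≤ ε * |x.1 + α * x.2| + |α * x.1 - x.2| := by positivity
  rw [show ε * |x.1 + α * x.2| + |α * x.1 - x.2|
      = Real.sqrt ((ε * |x.1 + α * x.2| + |α * x.1 - x.2|) ^ 2) from (Real.sqrt_sq h0).symm]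
  apply Real.sqrt_le_sqrt
  have h1 : (ε ^ 2 * (x.1 + α * x.2) ^ 2 + (α * x.1 - x.2) ^ 2) / (1 + α ^ 2)
      ≤ ε ^ 2 * (x.1 + α * x.2) ^ 2 + (α * x.1 - x.2) ^ 2 := by
    apply div_le_self (by positivity)
    nlinarith [sq_nonneg α]
  have h2 : ε ^ 2 * (x.1 + α * x.2) ^ 2 + (α * x.1 - x.2) ^ 2
      ≤ (ε * |x.1 + α * x.2| + |α * x.1 - x.2|) ^ 2 := by
    have e1 : |x.1 + α * x.2| ^ 2 = (x.1 + α * x.2) ^ 2 := sq_abs _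
    have e2 : |α * x.1 - x.2| ^ 2 = (α * x.1 - x.2) ^ 2 := sq_abs _
    nlinarith [mul_nonneg (mul_nonneg hε (abs_nonneg (x.1 + α * x.2))) (abs_nonneg (α * x.1 - x.2))]
  linarith

lemma f_le_two (α : ℝ) {ε : ℝ} (hε : 0 < ε) (hεh : ε < 1/2) :
    Real.log (injradEps α ε) / Real.log ε ≤ 2 := by
  have hε1 : ε ≤ 1 := by linarith
  have hlogε : Real.log ε < 0 := Real.log_neg hε (by linarith)
  rw [div_le_iff_of_neg hlogε]
  have h1 : Real.log (ε / 2) ≤ Real.log (injradEps α ε) :=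
    Real.log_le_log (by positivity) (injrad_ge_eps α hε hε1)
  rw [Real.log_div hε.ne' two_ne_zero] at h1
  have h2 : Real.log ε ≤ -Real.log 2 := by
    calc Real.log ε ≤ Real.log (1/2) := Real.log_le_log hε (by linarith)
    _ = -Real.log 2 := by rw [one_div, Real.log_inv]
  linarith

/-- limsup lower bound from an infinite solution set. -/
lemma limsup_lower_of_infinite (α ν : ℝ) (hirr : Irrational α) (hν : 1 < ν)
    (hinf : {pq : ℤ × ℤ | 1 ≤ pq.2 ∧
      |α - (pq.1 : ℝ) / (pq.2 : ℝ)| < 1 / (pq.2 : ℝ) ^ ν}.Infinite) :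
    1 - 1/ν ≤ Filter.limsup (fun ε : ℝ => Real.log (injradEps α ε) / Real.log ε)
      (nhdsWithin 0 (Set.Ioi 0)) := by
  have hν0 : (0:ℝ) < ν := by linarith
  set f : ℝ → ℝ := fun ε => Real.log (injradEps α ε) / Real.log ε with hfdef
  have hbdd : Filter.IsBoundedUnder (· ≤ ·) (nhdsWithin (0:ℝ) (Set.Ioi 0)) f := by
    refine ⟨2, ?_⟩
    rw [Filter.eventually_map]
    filter_upwards [Ioo_mem_nhdsGT_of_mem (show (0:ℝ) ∈ Set.Ico (0:ℝ) (1/2) by norm_num)]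
      with ε hε
    exact f_le_two α hε.1 hε.2
  have main : ∀ η : ℝ, 0 < η → 1 - 1/ν - η ≤ Filter.limsup f (nhdsWithin 0 (Set.Ioi 0)) := by
    intro η hη
    apply Filter.le_limsup_of_frequently_le _ hbdd
    rw [(nhdsGT_basis (0:ℝ)).frequently_iff]
    intro δ hδ
    set K₁ : ℝ := (1 + α ^ 2 + |α|) + 1 with hK₁
    have hK₁1 : (2:ℝ) ≤ K₁ := by rw [hK₁]; nlinarith [sq_nonneg α, abs_nonneg α]
    have hK₁0 : (0:ℝ) < K₁ := by linarith
    have hlogK₁ : 0 ≤ Real.log K₁ := Real.log_nonneg (by linarith)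
    set T : ℝ := Real.exp (-Real.log K₁ / η) with hT
    have hT0 : 0 < T := Real.exp_pos _
    have hT1 : T ≤ 1 := Real.exp_le_one_iff.2 (by
      apply div_nonpos_of_nonpos_of_nonneg <;> linarith)
    set m : ℝ := min δ T with hm
    have hm0 : 0 < m := lt_min hδ hT0
    obtain ⟨p, q, hq1, hqN, habs⟩ :=
      exists_large_q α ν hν0 hinf (max 1 ⌈m ^ (-(1/ν) : ℝ)⌉)
    have hq' : (0:ℝ) < (q:ℝ) := by exact_mod_cast hq1
    have hq1' : (1:ℝ) ≤ (q:ℝ) := by exact_mod_cast hq1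
    have hNreal : m ^ (-(1/ν) : ℝ) ≤ (q:ℝ) := by
      have h1 : (⌈m ^ (-(1/ν) : ℝ)⌉ : ℤ) ≤ q := le_trans (le_max_right _ _) hqN
      calc m ^ (-(1/ν) : ℝ) ≤ (⌈m ^ (-(1/ν) : ℝ)⌉ : ℝ) := Int.le_ceil _
      _ ≤ (q:ℝ) := by exact_mod_cast h1
    set d : ℝ := |α * (q:ℝ) - (p:ℝ)| with hd
    have hd0 : 0 < d := by
      rw [hd, abs_pos]
      intro h
      apply hirr
      exact ⟨(p : ℚ) / (q : ℚ), by push_cast; field_simp at h ⊢; linarith⟩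
    set ε : ℝ := d / (q:ℝ) with hε
    have hε0 : 0 < ε := div_pos hd0 hq'
    have hεeq : ε = |α - (p:ℝ)/(q:ℝ)| := by
      rw [hε, hd, show α * (q:ℝ) - (p:ℝ) = (α - (p:ℝ)/(q:ℝ)) * (q:ℝ) from by field_simp,
        abs_mul, abs_of_pos hq']
      field_simp
    have hεltq : ε < ((q:ℝ) ^ ν)⁻¹ := by
      rw [hεeq, ← one_div]; exact habs
    have hqν : m⁻¹ ≤ (q:ℝ) ^ ν := by
      have h1 : (m ^ (-(1/ν) : ℝ)) ^ ν ≤ (q:ℝ) ^ ν :=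
        Real.rpow_le_rpow (Real.rpow_nonneg hm0.le _) hNreal hν0.le
      rwa [← Real.rpow_mul hm0.le, show (-(1/ν) : ℝ) * ν = -1 from by field_simp,
        Real.rpow_neg_one] at h1
    have hεm : ε < m := by
      have h2 : ((q:ℝ) ^ ν)⁻¹ ≤ m := by
        rw [inv_le_comm₀ (Real.rpow_pos_of_pos hq' ν) hm0]
        exact hqν
      exact lt_of_lt_of_le hεltq h2
    have hεδ : ε < δ := lt_of_lt_of_le hεm (min_le_left _ _)
    have hεT : ε ≤ T := le_of_lt (lt_of_lt_of_le hεm (min_le_right _ _))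
    have hεlt1 : ε < 1 := lt_of_lt_of_le hεm (le_trans (min_le_right _ _) hT1)
    have hε1 : ε ≤ 1 := hεlt1.le
    have hdq : d = ε * (q:ℝ) := by rw [hε]; field_simp
    have hd1 : d ≤ 1 := by
      have hstep : ε * (q:ℝ) < 1 := by
        calc ε * (q:ℝ) < ((q:ℝ)^ν)⁻¹ * (q:ℝ) := mul_lt_mul_of_pos_right hεltq hq'
        _ = (q:ℝ) ^ ((1:ℝ) - ν) := by
            rw [Real.rpow_sub hq', Real.rpow_one]
            field_simp
        _ ≤ 1 := Real.rpow_le_one_of_one_le_of_nonpos hq1' (by linarith)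
      rw [hdq]; exact hstep.le
    -- norm bound for the vector (q, p)
    have hvec : normEps α ε ((q:ℝ), (p:ℝ)) ≤ K₁ * d := by
      have h1 := normEps_upper α hε0.le ((q:ℝ), (p:ℝ))
      simp only at h1
      have hp_bd : |(p:ℝ)| ≤ |α| * (q:ℝ) + 1 := by
        calc |(p:ℝ)| = |α * (q:ℝ) - (α * (q:ℝ) - (p:ℝ))| := by congr 1; ring
        _ ≤ |α * (q:ℝ)| + |α * (q:ℝ) - (p:ℝ)| := abs_sub _ _
        _ ≤ |α| * (q:ℝ) + 1 := by
            rw [abs_mul, abs_of_pos hq']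
            exact add_le_add le_rfl (hd ▸ hd1)
      have hu_bd : |(q:ℝ) + α * (p:ℝ)| ≤ (1 + α ^ 2 + |α|) * (q:ℝ) := by
        calc |(q:ℝ) + α * (p:ℝ)| ≤ (q:ℝ) + |α| * |(p:ℝ)| := by
              have h := abs_add_le ((q:ℝ)) (α * (p:ℝ))
              rw [abs_mul, abs_of_pos hq'] at h
              exact h
        _ ≤ (q:ℝ) + |α| * (|α| * (q:ℝ) + 1) :=
              add_le_add le_rfl (mul_le_mul_of_nonneg_left hp_bd (abs_nonneg α))
        _ ≤ (1 + α ^ 2 + |α|) * (q:ℝ) := by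
              have h2 : |α| * 1 ≤ |α| * (q:ℝ) := mul_le_mul_of_nonneg_left hq1' (abs_nonneg α)
              have h3 := sq_abs α
              nlinarith [abs_nonneg α]
      calc normEps α ε ((q:ℝ), (p:ℝ)) ≤ ε * |(q:ℝ) + α * (p:ℝ)| + |α * (q:ℝ) - (p:ℝ)| := h1
      _ ≤ ε * ((1 + α ^ 2 + |α|) * (q:ℝ)) + d := by
          rw [hd]
          exact add_le_add (mul_le_mul_of_nonneg_left hu_bd hε0.le) le_rfl
      _ = (1 + α ^ 2 + |α|) * d + d := by rw [hdq]; ring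
      _ = K₁ * d := by rw [hK₁]; ring
    -- d < ε^(1-1/ν)
    have hqlt : (q:ℝ) < ε ^ (-(1/ν) : ℝ) := by
      have h1 : (q:ℝ) ^ ν < ε⁻¹ := by
        rw [← inv_inv ((q:ℝ)^ν)]
        exact inv_strictAnti₀ hε0 hεltq
      have h2 : ((q:ℝ) ^ ν) ^ ((1:ℝ)/ν) < (ε⁻¹) ^ ((1:ℝ)/ν) :=
        Real.rpow_lt_rpow (Real.rpow_nonneg hq'.le _) h1 (by positivity)
      rwa [← Real.rpow_mul hq'.le, show ν * ((1:ℝ)/ν) = 1 from by field_simp,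
        Real.rpow_one, Real.inv_rpow hε0.le, ← Real.rpow_neg hε0.le,
        show (-(1/ν) : ℝ) = -((1:ℝ)/ν) from by ring] at h2
    have hdlt : d < ε ^ ((1:ℝ) - 1/ν) := by
      rw [hdq]
      calc ε * (q:ℝ) < ε * ε ^ (-(1/ν) : ℝ) := mul_lt_mul_of_pos_left hqlt hε0
      _ = ε ^ ((1:ℝ) + (-(1/ν))) := by rw [Real.rpow_add hε0, Real.rpow_one]
      _ = ε ^ ((1:ℝ) - 1/ν) := by rw [show (1:ℝ) + -(1/ν) = 1 - 1/ν from by ring]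
    refine ⟨ε, ⟨hε0, hεδ⟩, ?_⟩
    have hlogε : Real.log ε < 0 := Real.log_neg hε0 hεlt1
    have hinj_pos := injrad_pos α hε0 hε1
    have hqp : ((q : ℤ), (p : ℤ)) ≠ ((0:ℤ), (0:ℤ)) := by
      intro h
      rw [Prod.mk.injEq] at h
      omega
    have hinj_le : injradEps α ε ≤ K₁ * d := by
      have h1 := injradEps_le α ε q p hqp
      have h2 : (0:ℝ) ≤ normEps α ε ((q:ℝ), (p:ℝ)) := normEps_nonneg _ _ _
      nlinarith
    have hloginj : Real.log (injradEps α ε) ≤ Real.log K₁ + (1 - 1/ν) * Real.log ε := by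
      have h1 : injradEps α ε ≤ K₁ * ε ^ ((1:ℝ) - 1/ν) := by
        calc injradEps α ε ≤ K₁ * d := hinj_le
        _ ≤ K₁ * ε ^ ((1:ℝ) - 1/ν) := mul_le_mul_of_nonneg_left hdlt.le hK₁0.le
      have h2 : Real.log (injradEps α ε) ≤ Real.log (K₁ * ε ^ ((1:ℝ) - 1/ν)) :=
        Real.log_le_log hinj_pos h1
      rwa [Real.log_mul hK₁0.ne' (by positivity), Real.log_rpow hε0] at h2
    show 1 - 1/ν - η ≤ Real.log (injradEps α ε) / Real.log ε
    rw [le_div_iff_of_neg hlogε]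
    have hη1 : η * Real.log ε ≤ -Real.log K₁ := by
      have h1 : Real.log ε ≤ -Real.log K₁ / η := by
        calc Real.log ε ≤ Real.log T := Real.log_le_log hε0 hεT
        _ = -Real.log K₁ / η := by rw [hT, Real.log_exp]
      have := (le_div_iff₀ hη).1 h1
      linarith
    have hexp : (1 - 1/ν - η) * Real.log ε
        = (1 - 1/ν) * Real.log ε - η * Real.log ε := by ring
    linarith
  apply le_of_forall_pos_le_add
  intro η hη
  linarith [main η hη]

lemma two_le_irrExp (α : ℝ) (hα : Irrational α) : 2 ≤ irrExp α := by
  have hdir := Real.infinite_rat_abs_sub_lt_one_div_den_sq_of_irrational hα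
  apply le_sSup
  refine ⟨2, by norm_num, ?_⟩
  set g : ℚ → ℤ × ℤ := fun r => (r.num, (r.den : ℤ)) with hg
  have hginj : Function.Injective g := by
    intro r s h
    rw [hg, Prod.mk.injEq] at h
    obtain ⟨h1, h2⟩ := h
    have h2' : r.den = s.den := by exact_mod_cast h2
    exact Rat.ext h1 h2'
  have himg := hdir.image (hginj.injOn)
  apply Set.Infinite.mono _ himg
  rintro _ ⟨r, hr, rfl⟩
  simp only [hg, Set.mem_setOf_eq]
  refine ⟨by exact_mod_cast r.pos, ?_⟩
  simp only [Set.mem_setOf_eq] at hr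
  have hden : ((r.den : ℤ) : ℝ) = (r.den : ℝ) := Int.cast_natCast r.den
  have hnum : ((r.num : ℤ) : ℝ) / ((r.den : ℤ) : ℝ) = (r : ℝ) := by
    rw [hden, Rat.cast_def]
  have hpow : ((r.den : ℤ) : ℝ) ^ (2:ℝ) = ((r.den : ℝ)) ^ (2:ℕ) := by
    rw [hden, show (2:ℝ) = ((2:ℕ):ℝ) from by norm_num, Real.rpow_natCast]
  show |α - ((r.num : ℤ) : ℝ) / ((r.den : ℤ) : ℝ)| < 1 / ((r.den : ℤ) : ℝ) ^ (2:ℝ)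
  rw [hnum, hpow]
  exact_mod_cast hr

lemma finite_of_gt_irrExp (α ν : ℝ) (h : irrExp α < ENNReal.ofReal ν) :
    {pq : ℤ × ℤ | 1 ≤ pq.2 ∧
      |α - (pq.1 : ℝ) / (pq.2 : ℝ)| < 1 / (pq.2 : ℝ) ^ ν}.Finite := by
  by_contra hinf
  rw [← Set.not_infinite, not_not] at hinf
  have hmem : ENNReal.ofReal ν ∈ {m : ℝ≥0∞ | ∃ ν' : ℝ, m = ENNReal.ofReal ν' ∧
      {pq : ℤ × ℤ | 1 ≤ pq.2 ∧
        |α - (pq.1 : ℝ) / (pq.2 : ℝ)| < 1 / (pq.2 : ℝ) ^ ν'}.Infinite} :=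
    ⟨ν, rfl, hinf⟩
  exact absurd (le_sSup hmem) (not_le.2 h)



lemma exists_nu_of_lt (α : ℝ) (c : ℝ≥0∞) (h : c < irrExp α) :
    ∃ ν : ℝ, c < ENNReal.ofReal ν ∧
      {pq : ℤ × ℤ | 1 ≤ pq.2 ∧
        |α - (pq.1 : ℝ) / (pq.2 : ℝ)| < 1 / (pq.2 : ℝ) ^ ν}.Infinite := by
  unfold irrExp at h
  obtain ⟨m, hm, hcm⟩ := lt_sSup_iff.1 h
  obtain ⟨ν, rfl, hinf⟩ := hm
  exact ⟨ν, hcm, hinf⟩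

/-- For the adiabatic collapse `g_ε` of the linear flow of slope `α` (irrational) on
`T²`, `limsup_{ε→0⁺} ln injrad(T², g_ε) / ln ε = 1 - 1/μ(α)`. -/
theorem stmt_15 (α : ℝ) (hα : Irrational α) :
    Filter.limsup (fun ε : ℝ => Real.log (injradEps α ε) / Real.log ε)
        (nhdsWithin 0 (Set.Ioi 0)) = 1 - ((irrExp α)⁻¹).toReal := by
  have h2μ := two_le_irrExp α hα
  set L := Filter.limsup (fun ε : ℝ => Real.log (injradEps α ε) / Real.log ε)
    (nhdsWithin (0:ℝ) (Set.Ioi 0)) with hL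
  by_cases hμ : irrExp α = ⊤
  · -- Liouville case : limit is 1
    rw [hμ]
    simp only [ENNReal.inv_top, ENNReal.toReal_zero, sub_zero]
    apply le_antisymm
    · have hbd : ∀ ε : ℝ, 0 < ε → ε ≤ 1 → (1/2 : ℝ) * ε ^ (1:ℝ) ≤ injradEps α ε := by
        intro ε h h1
        rw [Real.rpow_one]
        have := injrad_ge_eps α h h1
        linarith
      exact limsup_upper_of_bound α (1/2) 1 (by norm_num) zero_le_one hbd
    · have key : ∀ n : ℕ, 1 - 1/((n:ℝ)+1) ≤ L := by
        intro n
        have hlt : (ENNReal.ofReal ((n:ℝ)+1)) < irrExp α := by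
          rw [hμ]; exact ENNReal.ofReal_lt_top
        obtain ⟨ν, hcm, hinfν⟩ := exists_nu_of_lt α _ hlt
        have hν : (n:ℝ)+1 < ν := by
          by_contra hcon
          push_neg at hcon
          exact absurd (ENNReal.ofReal_le_ofReal hcon) (not_le.2 hcm)
        have hn0 : (0:ℝ) ≤ (n:ℝ) := Nat.cast_nonneg n
        have h1ν : 1 < ν := by linarith
        have hlow := limsup_lower_of_infinite α ν hα h1ν hinfν
        have hdiv : 1/ν ≤ 1/((n:ℝ)+1) := one_div_le_one_div_of_le (by linarith) hν.le
        rw [hL]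
        linarith
      have htend : Filter.Tendsto (fun n : ℕ => 1 - 1/((n:ℝ)+1)) Filter.atTop (nhds 1) := by
        have h0 := tendsto_one_div_add_atTop_nhds_zero_nat (𝕜 := ℝ)
        have h1 := Filter.Tendsto.sub
          (tendsto_const_nhds : Filter.Tendsto (fun _ : ℕ => (1:ℝ)) Filter.atTop (nhds 1)) h0
        simpa using h1
      exact le_of_tendsto' htend key
  · -- finite exponent
    set m₀ := (irrExp α).toReal with hm₀
    have hm2 : (2:ℝ) ≤ m₀ := by
      have h1 := ENNReal.toReal_mono hμ h2μ
      simpa using h1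
    have hμeq : irrExp α = ENNReal.ofReal m₀ := (ENNReal.ofReal_toReal hμ).symm
    have hRHS : ((irrExp α)⁻¹).toReal = 1/m₀ := by
      rw [ENNReal.toReal_inv, one_div, hm₀]
    rw [hRHS]
    apply le_antisymm
    · -- upper bound
      have key : ∀ n : ℕ, L ≤ 1 - 1/(m₀ + 1/((n:ℝ)+1)) := by
        intro n
        have hn1 : (0:ℝ) < 1/((n:ℝ)+1) := by positivity
        set ν : ℝ := m₀ + 1/((n:ℝ)+1) with hνdef
        have hνpos : 0 < ν := by rw [hνdef]; linarith
        have h1ν : 1 < ν := by rw [hνdef]; linarith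
        have hgt : irrExp α < ENNReal.ofReal ν := by
          rw [hμeq, ENNReal.ofReal_lt_ofReal_iff hνpos, hνdef]
          linarith
        have hfin := finite_of_gt_irrExp α ν hgt
        obtain ⟨C, hC, hbd⟩ := elem_lower α ν hα h1ν hfin
        have hbd' : ∀ ε : ℝ, 0 < ε → ε ≤ 1 → (C/2) * ε ^ (1-1/ν) ≤ injradEps α ε := by
          intro ε hε hε1
          have h1 := injradEps_ge α ε (C * ε^(1-1/ν)) (fun p q hpq => hbd ε hε hε1 p q hpq)
          linarith
        have hθ : (0:ℝ) ≤ 1 - 1/ν := by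
          have : 1/ν ≤ 1 := by rw [div_le_one hνpos]; linarith
          linarith
        exact limsup_upper_of_bound α (C/2) (1-1/ν) (by linarith) hθ hbd'
      have htend : Filter.Tendsto (fun n : ℕ => 1 - 1/(m₀ + 1/((n:ℝ)+1))) Filter.atTop
          (nhds (1 - 1/m₀)) := by
        have h0 := tendsto_one_div_add_atTop_nhds_zero_nat (𝕜 := ℝ)
        have h1 : Filter.Tendsto (fun n : ℕ => m₀ + 1/((n:ℝ)+1)) Filter.atTop (nhds m₀) := by
          have := Filter.Tendsto.add
            (tendsto_const_nhds : Filter.Tendsto (fun _ : ℕ => m₀) Filter.atTop (nhds m₀)) h0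
          simpa using this
        have h2 := h1.inv₀ (ne_of_gt (by linarith : (0:ℝ) < m₀))
        have h3 := Filter.Tendsto.sub
          (tendsto_const_nhds : Filter.Tendsto (fun _ : ℕ => (1:ℝ)) Filter.atTop (nhds 1)) h2
        simpa [one_div] using h3
      exact ge_of_tendsto' htend key
    · -- lower bound
      have key : ∀ n : ℕ, 1 - 1/(m₀ - 1/((n:ℝ)+1)) ≤ L := by
        intro n
        have hn1 : (0:ℝ) < 1/((n:ℝ)+1) := by positivity
        have hn2 : 1/((n:ℝ)+1) ≤ 1 := by
          rw [div_le_one (by positivity)]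
          linarith [Nat.cast_nonneg (α := ℝ) n]
        have hlt : ENNReal.ofReal (m₀ - 1/((n:ℝ)+1)) < irrExp α := by
          rw [hμeq, ENNReal.ofReal_lt_ofReal_iff (by linarith : (0:ℝ) < m₀)]
          linarith
        obtain ⟨ν, hcm, hinfν⟩ := exists_nu_of_lt α _ hlt
        have hν : m₀ - 1/((n:ℝ)+1) < ν := by
          by_contra hcon
          push_neg at hcon
          exact absurd (ENNReal.ofReal_le_ofReal hcon) (not_le.2 hcm)
        have h1ν : 1 < ν := by linarith
        have hlow := limsup_lower_of_infinite α ν hα h1ν hinfν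
        have hdiv : 1/ν ≤ 1/(m₀ - 1/((n:ℝ)+1)) :=
          one_div_le_one_div_of_le (by linarith) hν.le
        rw [hL]
        linarith
      have htend : Filter.Tendsto (fun n : ℕ => 1 - 1/(m₀ - 1/((n:ℝ)+1))) Filter.atTop
          (nhds (1 - 1/m₀)) := by
        have h0 := tendsto_one_div_add_atTop_nhds_zero_nat (𝕜 := ℝ)
        have h1 : Filter.Tendsto (fun n : ℕ => m₀ - 1/((n:ℝ)+1)) Filter.atTop (nhds m₀) := by
          have := Filter.Tendsto.sub
            (tendsto_const_nhds : Filter.Tendsto (fun _ : ℕ => m₀) Filter.atTop (nhds m₀)) h0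
          simpa using this
        have h2 := h1.inv₀ (ne_of_gt (by linarith : (0:ℝ) < m₀))
        have h3 := Filter.Tendsto.sub
          (tendsto_const_nhds : Filter.Tendsto (fun _ : ℕ => (1:ℝ)) Filter.atTop (nhds 1)) h2
        simpa [one_div] using h3
      exact le_of_tendsto' htend key
end
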